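/- arXiv:2208.11869 — 3 statements merged into one kernel-verified Lean document; each statement's English description precedes it below -/
import Mathlib

section
/- If σ belongs to M ∪ M̄ (σ is a strict local minimum of H or lies in a stable plateau), then every 1-cluster of σ is a rectangle. -/
namespace GenPotts

/-- Spin values: `0` represents spin `1`, `1` represents spin `2`, `2` represents spin `3`. -/
abbrev Spin := Fin 3

/-- Vertices of the two-dimensional discrete torus. -/
abbrev Vtx (K L : ℕ) := ZMod K × ZMod L

/-- Spin configurations. -/
abbrev Config (K L : ℕ) := Vtx K L → Spin

section Defs

variable (K L : ℕ)

/-- The constant configuration with all spins equal to `r`. -/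
def const (r : Spin) : Config K L := fun _ => r

variable [NeZero K] [NeZero L]

/-- The number of (unordered nearest-neighbour) edges of the torus whose endpoint spins are
`i` and `j`.  Each edge is represented exactly once as a pair (vertex, direction), where the
direction `true` points right and `false` points up. -/
def nEdge (σ : Config K L) (i j : Spin) : ℕ :=
  ((Finset.univ : Finset (Vtx K L × Bool)).filter (fun p =>
    (σ p.1 = i ∧ σ (if p.2 then (p.1.1 + 1, p.1.2) else (p.1.1, p.1.2 + 1)) = j) ∨
    (σ p.1 = j ∧ σ (if p.2 then (p.1.1 + 1, p.1.2) else (p.1.1, p.1.2 + 1)) = i))).card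

/-- The number of vertices with spin `i`. -/
def nVtx (σ : Config K L) (i : Spin) : ℕ :=
  ((Finset.univ : Finset (Vtx K L)).filter (fun v => σ v = i)).card

end Defs

/-- The coupling constants of the generalized Potts model. -/
structure Couplings where
  J11 : ℝ
  J22 : ℝ
  J33 : ℝ
  J12 : ℝ
  J13 : ℝ
  J23 : ℝ

namespace Couplings

def γ1 (C : Couplings) : ℝ := C.J11 - C.J22
def γ12 (C : Couplings) : ℝ := C.J12 + C.J22
def γ23 (C : Couplings) : ℝ := C.J23 + C.J22

end Couplings

/-- The Hamiltonian of the generalized three-state Potts model. -/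
noncomputable def H (K L : ℕ) [NeZero K] [NeZero L] (C : Couplings) (σ : Config K L) : ℝ :=
  -(C.J11 * nEdge K L σ 0 0 + C.J22 * nEdge K L σ 1 1 + C.J33 * nEdge K L σ 2 2)
    + C.J12 * nEdge K L σ 0 1 + C.J13 * nEdge K L σ 0 2 + C.J23 * nEdge K L σ 1 2

/-- The auxiliary function `f_h`. -/
noncomputable def fh (h x : ℝ) : ℝ :=
  4 * (x + h / 2) * (⌈(x + h / 2) / h⌉ : ℝ)
    - 2 * h * ((⌈(x + h / 2) / h⌉ : ℝ) ^ 2 - (⌈(x + h / 2) / h⌉ : ℝ) + 1)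

/-- The critical length `ℓ*`. -/
noncomputable def lstar (C : Couplings) : ℕ := ⌈(2 * C.γ12 + C.γ1) / (2 * C.γ1)⌉₊

/-- The critical energy barrier `Γ*`. -/
noncomputable def Γstar (C : Couplings) : ℝ := fh C.γ1 C.γ12

/-- The standing assumptions on the lattice sizes and the coupling constants. -/
structure Admissible (K L : ℕ) (C : Couplings) : Prop where
  hKL : K ≤ L
  hK : 2 * lstar C ^ 2 ≤ K
  pos11 : 0 < C.J11
  pos22 : 0 < C.J22
  pos33 : 0 < C.J33
  pos12 : 0 < C.J12
  pos13 : 0 < C.J13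
  pos23 : 0 < C.J23
  h1122 : C.J22 < C.J11
  h2233 : C.J22 = C.J33
  h1213 : C.J12 = C.J13
  hA : ∀ n : ℤ, (2 * C.γ12 + C.γ1) / (2 * C.γ1) ≠ (n : ℝ)
  hB : fh C.γ1 C.γ12 = 2 * (K + 1) * C.γ23
  hC : 4 * C.γ23 + C.γ1 ≤ 2 * C.γ12

section Paths

variable (K L : ℕ) [NeZero K] [NeZero L]

/-- Two configurations differ at exactly one vertex. -/
def SingleFlip (σ σ' : Config K L) : Prop :=
  ∃ v, σ v ≠ σ' v ∧ ∀ w, w ≠ v → σ w = σ' w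

/-- A path: a finite sequence of configurations in which consecutive configurations differ
at exactly one vertex. -/
structure Path where
  len : ℕ
  toFun : ℕ → Config K L
  step : ∀ n, n < len → SingleFlip K L (toFun n) (toFun (n + 1))

/-- The height of a path: the maximum of `H` along it. -/
noncomputable def Path.height {K L : ℕ} [NeZero K] [NeZero L] (ω : Path K L)
    (C : Couplings) : ℝ :=
  Finset.sup' (Finset.range (ω.len + 1))
    (Finset.nonempty_range_iff.mpr (Nat.succ_ne_zero _))
    (fun n => H K L C (ω.toFun n))

/-- The path goes from `σ` to `σ'`. -/
def Path.FromTo {K L : ℕ} [NeZero K] [NeZero L] (ω : Path K L)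
    (σ σ' : Config K L) : Prop :=
  ω.toFun 0 = σ ∧ ω.toFun ω.len = σ'

/-- A path is an `ij`-path if every configuration along it has all spins in `{i, j}`. -/
def Path.OnlySpins {K L : ℕ} [NeZero K] [NeZero L] (ω : Path K L) (i j : Spin) : Prop :=
  ∀ n ≤ ω.len, ∀ v, ω.toFun n v = i ∨ ω.toFun n v = j

/-- The communication height `Φ(σ, σ')`: the minimal height over paths from `σ` to `σ'`. -/
noncomputable def Phi (C : Couplings) (σ σ' : Config K L) : ℝ :=
  sInf {x | ∃ ω : Path K L, ω.FromTo σ σ' ∧ ω.height C = x}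

/-- The communication height `Φ(σ, A)` between `σ` and a set `A`. -/
noncomputable def PhiSet (C : Couplings) (σ : Config K L) (A : Set (Config K L)) : ℝ :=
  sInf {x | ∃ ω : Path K L, ω.toFun 0 = σ ∧ ω.toFun ω.len ∈ A ∧ ω.height C = x}

/-- The energy barrier `Γ(σ, σ') = Φ(σ, σ') − H(σ)`. -/
noncomputable def Gamma (C : Couplings) (σ σ' : Config K L) : ℝ :=
  Phi K L C σ σ' - H K L C σ

/-- The stability level `V_σ = Φ(σ, I_σ) − H(σ)` where `I_σ = {η : H(η) < H(σ)}`. -/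
noncomputable def stabLevel (C : Couplings) (σ : Config K L) : ℝ :=
  PhiSet K L C σ {η | H K L C η < H K L C σ} - H K L C σ

/-- The set `X^s` of global minimizers of `H`. -/
def Xs (C : Couplings) : Set (Config K L) :=
  {σ | ∀ η, H K L C σ ≤ H K L C η}

/-- The set `X^m` of metastable configurations. -/
noncomputable def Xm (C : Couplings) : Set (Config K L) :=
  {η | η ∉ Xs K L C ∧
    stabLevel K L C η = sSup {x | ∃ σ, σ ∉ Xs K L C ∧ stabLevel K L C σ = x}}

/-- The projection operator `P^{rs}` replacing every spin `r` by `s`. -/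
def proj (r s : Spin) (σ : Config K L) : Config K L :=
  fun v => if σ v = r then s else σ v

/-- The initial cycle `C_r = {σ : Φ(𝐫, σ) < H(𝟐) + Γ*}`. -/
noncomputable def initCycle (C : Couplings) (r : Spin) : Set (Config K L) :=
  {σ | Phi K L C (const K L r) σ < H K L C (const K L 1) + Γstar C}

/-- An optimal path from `σ` to `σ'`: a path whose height equals `Φ(σ, σ')`. -/
noncomputable def OptPath (C : Couplings) (σ σ' : Config K L) (ω : Path K L) : Prop :=
  ω.FromTo σ σ' ∧ ω.height C = Phi K L C σ σ'

/-- The configurations at which `H` attains its maximum along a path. -/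
noncomputable def pathArgmax (C : Couplings) (ω : Path K L) : Set (Config K L) :=
  {ξ | (∃ n ≤ ω.len, ω.toFun n = ξ) ∧ H K L C ξ = ω.height C}

/-- The set of minimal saddles `S(σ, σ')`. -/
noncomputable def Saddles (C : Couplings) (σ σ' : Config K L) : Set (Config K L) :=
  {ξ | ∃ ω : Path K L, OptPath K L C σ σ' ω ∧ ξ ∈ pathArgmax K L C ω}

/-- `W` is a gate for the transition `σ → σ'`. -/
noncomputable def IsGate (C : Couplings) (σ σ' : Config K L) (W : Set (Config K L)) : Prop :=
  W ⊆ Saddles K L C σ σ' ∧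
    ∀ ω : Path K L, OptPath K L C σ σ' ω → ∃ n ≤ ω.len, ω.toFun n ∈ W

/-- `W` is a minimal gate for the transition `σ → σ'`. -/
noncomputable def IsMinimalGate (C : Couplings) (σ σ' : Config K L)
    (W : Set (Config K L)) : Prop :=
  IsGate K L C σ σ' W ∧
    ∀ W', W' ⊂ W → ∃ ω : Path K L, OptPath K L C σ σ' ω ∧ ∀ n ≤ ω.len, ω.toFun n ∉ W'

/-- `G(σ, σ')`: the union of all minimal gates for the transition `σ → σ'`. -/
noncomputable def gateUnion (C : Couplings) (σ σ' : Config K L) : Set (Config K L) :=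
  {ξ | ∃ W, IsMinimalGate K L C σ σ' W ∧ ξ ∈ W}

end Paths

section Geometry

variable (K L : ℕ)

/-- The `a × b` rectangle (`a` columns, `b` rows) with lower-left corner `(x0, y0)`. -/
def rectSet (x0 : ZMod K) (y0 : ZMod L) (a b : ℕ) : Set (Vtx K L) :=
  {v | ∃ i j : ℕ, i < a ∧ j < b ∧ v = (x0 + (i : ZMod K), y0 + (j : ZMod L))}

/-- A vertical bar of `l` consecutive cells in column `x` starting at row `y0`. -/
def barV (x : ZMod K) (y0 : ZMod L) (l : ℕ) : Set (Vtx K L) :=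
  {v | ∃ j : ℕ, j < l ∧ v = (x, y0 + (j : ZMod L))}

/-- A horizontal bar of `l` consecutive cells in row `y` starting at column `x0`. -/
def barH (x0 : ZMod K) (y : ZMod L) (l : ℕ) : Set (Vtx K L) :=
  {v | ∃ i : ℕ, i < l ∧ v = (x0 + (i : ZMod K), y)}

/-- The configuration with spin `s` exactly on the set `A` and spin `r` elsewhere. -/
noncomputable def onSet (A : Set (Vtx K L)) (r s : Spin) : Config K L :=
  fun v => @ite _ (v ∈ A) (Classical.dec _) s r

/-- `R_{a,b}(r,s)`: configurations equal to `r` everywhere except for spins `s` on an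
`a × b` rectangle. -/
noncomputable def Rconf (a b : ℕ) (r s : Spin) : Set (Config K L) :=
  {σ | ∃ x0 y0, σ = onSet K L (rectSet K L x0 y0 a b) r s}

/-- `B^l_{a,b}(r,s)`: configurations equal to `r` everywhere except for spins `s` on an
`a × b` rectangle together with a bar of `l` consecutive cells attached to one of the
(vertical) sides of length `b`. -/
noncomputable def Bconf (a b l : ℕ) (r s : Spin) : Set (Config K L) :=
  {σ | ∃ (x0 : ZMod K) (y0 : ZMod L) (x : ZMod K) (j0 : ℕ),
      (x = x0 - 1 ∨ x = x0 + (a : ZMod K)) ∧ j0 + l ≤ b ∧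
      σ = onSet K L (rectSet K L x0 y0 a b ∪ barV K L x (y0 + (j0 : ZMod L)) l) r s}

/-- `B̂^l_{a,b}(r,s)`: as `B^l_{a,b}(r,s)` but with the bar attached to one of the
(horizontal) sides of length `a`. -/
noncomputable def Bhat (a b l : ℕ) (r s : Spin) : Set (Config K L) :=
  {σ | ∃ (x0 : ZMod K) (y0 : ZMod L) (y : ZMod L) (i0 : ℕ),
      (y = y0 - 1 ∨ y = y0 + (b : ZMod L)) ∧ i0 + l ≤ a ∧
      σ = onSet K L (rectSet K L x0 y0 a b ∪ barH K L (x0 + (i0 : ZMod K)) y l) r s}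

/-- The critical set `W(𝐦, 𝟏) = B^1_{ℓ*−1,ℓ*}(m,1) ∪ B̂^1_{ℓ*,ℓ*−1}(m,1)`. -/
noncomputable def Wcrit (C : Couplings) (m : Spin) : Set (Config K L) :=
  Bconf K L (lstar C - 1) (lstar C) 1 m 0 ∪ Bhat K L (lstar C) (lstar C - 1) 1 m 0

/-- The set `W'(𝐦, 𝟏) = B̂^1_{ℓ*−1,ℓ*}(m,1) ∪ B^1_{ℓ*,ℓ*−1}(m,1)`. -/
noncomputable def Wcrit' (C : Couplings) (m : Spin) : Set (Config K L) :=
  Bhat K L (lstar C - 1) (lstar C) 1 m 0 ∪ Bconf K L (lstar C) (lstar C - 1) 1 m 0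

/-- The set `𝒫(𝐫, 𝐬)`. -/
noncomputable def Pgate (r s : Spin) : Set (Config K L) :=
  Bconf K L 1 K (K - 1) r s ∪ (if K = L then Bhat K L K 1 (K - 1) r s else ∅)

/-- The set `𝒬(𝐫, 𝐬)`. -/
noncomputable def Qgate (r s : Spin) : Set (Config K L) :=
  Rconf K L 2 (K - 1) r s ∪ Bconf K L 1 K (K - 2) r s ∪
    (if K = L then Rconf K L (K - 1) 2 r s ∪ Bhat K L K 1 (K - 2) r s else ∅)

/-- The set `ℋ_i(𝐫, 𝐬)`. -/
noncomputable def Hgate (i : ℕ) (r s : Spin) : Set (Config K L) :=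
  Bconf K L 1 K i r s ∪ (⋃ j ∈ Finset.Icc (i + 1) (K - 2), Bconf K L 1 (K - 1) j r s) ∪
    (if K = L then
      Bhat K L K 1 i r s ∪ ⋃ j ∈ Finset.Icc (i + 1) (K - 2), Bhat K L (K - 1) 1 j r s
    else ∅)

/-- The set `𝒲^h_j(𝐫, 𝐬)`. -/
noncomputable def Wgate (j h : ℕ) (r s : Spin) : Set (Config K L) :=
  Bconf K L j K h r s ∪ (if K = L then Bhat K L K j h r s else ∅)

/-- The admissible gate collection for the transition between `𝟐` and `𝟑`. -/
noncomputable def gateCollection : Set (Set (Config K L)) :=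
  {A | (∃ j h, 2 ≤ j ∧ j ≤ L - 3 ∧ 1 ≤ h ∧ h ≤ K - 1 ∧ A = Wgate K L j h 1 2)
    ∨ A = Qgate K L 1 2 ∨ A = Pgate K L 1 2 ∨ A = Pgate K L 2 1 ∨ A = Qgate K L 2 1
    ∨ (∃ i, 1 ≤ i ∧ i ≤ K - 3 ∧ A = Hgate K L i 1 2)
    ∨ (∃ i, 1 ≤ i ∧ i ≤ K - 3 ∧ A = Hgate K L i 2 1)}

/-- The union `𝒲(𝟐, 𝟑)` of all the plateau gates between `𝟐` and `𝟑`. -/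
noncomputable def W23 : Set (Config K L) :=
  (⋃ i ∈ Finset.Icc 1 (K - 3), Hgate K L i 1 2) ∪ Qgate K L 1 2 ∪ Pgate K L 1 2 ∪
    (⋃ j ∈ Finset.Icc 2 (L - 3), ⋃ h ∈ Finset.Icc 1 (K - 1), Wgate K L j h 1 2) ∪
    Pgate K L 2 1 ∪ Qgate K L 2 1 ∪ (⋃ i ∈ Finset.Icc 1 (K - 3), Hgate K L i 2 1)

/-- Nearest-neighbour adjacency on the torus. -/
def Adj (v w : Vtx K L) : Prop :=
  w = (v.1 + 1, v.2) ∨ w = (v.1 - 1, v.2) ∨ w = (v.1, v.2 + 1) ∨ w = (v.1, v.2 - 1)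

/-- An `r`-cluster of `σ`: a maximal connected set of vertices all having spin `r`. -/
def IsCluster (σ : Config K L) (r : Spin) (A : Set (Vtx K L)) : Prop :=
  A.Nonempty ∧ (∀ v ∈ A, σ v = r) ∧
    (∀ v ∈ A, ∀ w ∈ A,
      Relation.ReflTransGen (fun a b => a ∈ A ∧ b ∈ A ∧ Adj K L a b) v w) ∧
    (∀ v ∈ A, ∀ w, Adj K L v w → σ w = r → w ∈ A)

/-- A set of vertices is a rectangle: the product of a set of consecutive columns and a set
of consecutive rows of the torus. -/
def IsRectangle (A : Set (Vtx K L)) : Prop :=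
  ∃ (x0 : ZMod K) (y0 : ZMod L) (a b : ℕ), a ≤ K ∧ b ≤ L ∧ A = rectSet K L x0 y0 a b

end Geometry

section LocalMin

variable (K L : ℕ) [NeZero K] [NeZero L]

/-- The set `M` of strict local minima of `H`. -/
noncomputable def Mset (C : Couplings) : Set (Config K L) :=
  {σ | ∀ σ', SingleFlip K L σ σ' → H K L C σ < H K L C σ'}

/-- A stable plateau: a nonempty set of configurations of constant energy, connected under
single spin flips, such that every configuration outside it reachable by a single spin flip
has strictly larger energy. -/
noncomputable def IsStablePlateau (C : Couplings) (D : Set (Config K L)) : Prop :=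
  D.Nonempty ∧ (∃ c, ∀ σ ∈ D, H K L C σ = c) ∧
    (∀ σ ∈ D, ∀ η ∈ D,
      Relation.ReflTransGen (fun a b => a ∈ D ∧ b ∈ D ∧ SingleFlip K L a b) σ η) ∧
    (∀ σ ∈ D, ∀ σ', SingleFlip K L σ σ' → σ' ∉ D → H K L C σ < H K L C σ')

/-- The union `M̄` of all stable plateaux. -/
noncomputable def Mbar (C : Couplings) : Set (Config K L) :=
  {σ | ∃ D, IsStablePlateau K L C D ∧ σ ∈ D}

end LocalMin

lemma one_ne_zero_zmod (n : ℕ) (h : 2 ≤ n) : (1 : ZMod n) ≠ 0 := by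
  have : ((1:ℕ) : ZMod n) ≠ 0 := by
    rw [Ne, ZMod.natCast_eq_zero_iff, Nat.dvd_one]
    omega
  simpa using this

lemma exit_step {α : Type*} {r : α → α → Prop} {Q : Set α} {a b : α}
    (h : Relation.ReflTransGen r a b) : a ∈ Q → b ∉ Q →
    ∃ u v, u ∈ Q ∧ v ∉ Q ∧ r u v := by
  induction h with
  | refl => intro ha hb; exact absurd ha hb
  | @tail b' c' _ hbc ih =>
    intro ha hb
    by_cases hq : b' ∈ Q
    · exact ⟨b', c', hq, hb, hbc⟩
    · exact ih ha hq

lemma cluster_rectangle {K L : ℕ} (hK : 3 ≤ K) (hL : 3 ≤ L)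
    (A : Set (Vtx K L)) (hne : A.Nonempty)
    (hconn : ∀ v ∈ A, ∀ w ∈ A,
      Relation.ReflTransGen (fun a b => a ∈ A ∧ b ∈ A ∧ Adj K L a b) v w)
    (hmem2 : ∀ v w1 w2, w1 ∈ A → w2 ∈ A → Adj K L v w1 → Adj K L v w2 → w1 ≠ w2 → v ∈ A) :
    IsRectangle K L A := by
  classical
  have h1K : (1 : ZMod K) ≠ 0 := one_ne_zero_zmod K (by omega)
  have h1L : (1 : ZMod L) ≠ 0 := one_ne_zero_zmod L (by omega)
  have hxne : ∀ x : ZMod K, x + 1 ≠ x := by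
    intro x h
    exact h1K (by linear_combination h - x)
  have cornD : ∀ (x : ZMod K) (y : ZMod L), (x, y) ∈ A → (x+1, y+1) ∈ A →
      (x+1, y) ∈ A ∧ (x, y+1) ∈ A := by
    intro x y h1 h2
    constructor
    · refine hmem2 (x+1, y) (x, y) (x+1, y+1) h1 h2 (Or.inr (Or.inl (by simp)))
        (Or.inr (Or.inr (Or.inl rfl))) ?_
      intro h; exact (hxne x) (congrArg Prod.fst h).symm
    · refine hmem2 (x, y+1) (x, y) (x+1, y+1) h1 h2 (Or.inr (Or.inr (Or.inr (by simp))))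
        (Or.inl rfl) ?_
      intro h; exact (hxne x) (congrArg Prod.fst h).symm
  have cornA : ∀ (x : ZMod K) (y : ZMod L), (x+1, y) ∈ A → (x, y+1) ∈ A →
      (x, y) ∈ A ∧ (x+1, y+1) ∈ A := by
    intro x y h1 h2
    constructor
    · refine hmem2 (x, y) (x+1, y) (x, y+1) h1 h2 (Or.inl rfl)
        (Or.inr (Or.inr (Or.inl rfl))) ?_
      intro h; exact (hxne x) (congrArg Prod.fst h)
    · refine hmem2 (x+1, y+1) (x+1, y) (x, y+1) h1 h2 (Or.inr (Or.inr (Or.inr (by simp))))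
        (Or.inr (Or.inl (by simp))) ?_
      intro h; exact (hxne x) (congrArg Prod.fst h)
  -- fill a new column
  have fillCol : ∀ (xo xn : ZMod K) (y0 : ZMod L) (h jq : ℕ), jq < h →
      (∀ j, j < h → (xo, y0 + (j : ZMod L)) ∈ A) →
      (xn, y0 + (jq : ZMod L)) ∈ A →
      (∀ y : ZMod L, (xn, y) ∈ A → (xo, y + 1) ∈ A → (xn, y + 1) ∈ A) →
      (∀ y : ZMod L, (xn, y + 1) ∈ A → (xo, y) ∈ A → (xn, y) ∈ A) →
      ∀ j, j < h → (xn, y0 + (j : ZMod L)) ∈ A := by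
    intro xo xn y0 h jq hjq hQ hz c1 c2
    have up : ∀ s, jq + s < h → (xn, y0 + ((jq + s : ℕ) : ZMod L)) ∈ A := by
      intro s
      induction s with
      | zero => intro _; simpa using hz
      | succ n ih =>
        intro hlt
        have h1 := ih (by omega)
        have h2 := hQ (jq + n + 1) (by omega)
        have he : y0 + ((jq + n : ℕ) : ZMod L) + 1 = y0 + ((jq + (n + 1) : ℕ) : ZMod L) := by
          push_cast; ring
        have := c1 (y0 + ((jq + n : ℕ) : ZMod L)) h1 (by rw [he]; exact h2)
        rwa [he] at this
    have down : ∀ s, s ≤ jq → (xn, y0 + ((jq - s : ℕ) : ZMod L)) ∈ A := by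
      intro s
      induction s with
      | zero => intro _; simpa using hz
      | succ n ih =>
        intro hle
        have h1 := ih (by omega)
        have ht : jq - n = (jq - (n + 1)) + 1 := by omega
        rw [ht] at h1
        have h2 := hQ (jq - (n + 1)) (by omega)
        have he : y0 + ((jq - (n+1) : ℕ) : ZMod L) + 1 = y0 + (((jq - (n+1)) + 1 : ℕ) : ZMod L) := by
          push_cast; ring
        exact c2 (y0 + ((jq - (n+1) : ℕ) : ZMod L)) (by rw [he]; exact h1) h2
    intro j hj
    rcases le_or_gt jq j with hle | hlt
    · have := up (j - jq) (by omega)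
      rwa [show jq + (j - jq) = j by omega] at this
    · have := down (jq - j) (by omega)
      rwa [show jq - (jq - j) = j by omega] at this
  -- fill a new row
  have fillRow : ∀ (yo yn : ZMod L) (x0 : ZMod K) (w iq : ℕ), iq < w →
      (∀ i, i < w → (x0 + (i : ZMod K), yo) ∈ A) →
      (x0 + (iq : ZMod K), yn) ∈ A →
      (∀ x : ZMod K, (x, yn) ∈ A → (x + 1, yo) ∈ A → (x + 1, yn) ∈ A) →
      (∀ x : ZMod K, (x + 1, yn) ∈ A → (x, yo) ∈ A → (x, yn) ∈ A) →
      ∀ i, i < w → (x0 + (i : ZMod K), yn) ∈ A := by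
    intro yo yn x0 w iq hiq hQ hz c1 c2
    have up : ∀ s, iq + s < w → (x0 + ((iq + s : ℕ) : ZMod K), yn) ∈ A := by
      intro s
      induction s with
      | zero => intro _; simpa using hz
      | succ n ih =>
        intro hlt
        have h1 := ih (by omega)
        have h2 := hQ (iq + n + 1) (by omega)
        have he : x0 + ((iq + n : ℕ) : ZMod K) + 1 = x0 + ((iq + (n + 1) : ℕ) : ZMod K) := by
          push_cast; ring
        have := c1 (x0 + ((iq + n : ℕ) : ZMod K)) h1 (by rw [he]; exact h2)
        rwa [he] at this
    have down : ∀ s, s ≤ iq → (x0 + ((iq - s : ℕ) : ZMod K), yn) ∈ A := by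
      intro s
      induction s with
      | zero => intro _; simpa using hz
      | succ n ih =>
        intro hle
        have h1 := ih (by omega)
        have ht : iq - n = (iq - (n + 1)) + 1 := by omega
        rw [ht] at h1
        have h2 := hQ (iq - (n + 1)) (by omega)
        have he : x0 + ((iq - (n+1) : ℕ) : ZMod K) + 1 = x0 + (((iq - (n+1)) + 1 : ℕ) : ZMod K) := by
          push_cast; ring
        exact c2 (x0 + ((iq - (n+1) : ℕ) : ZMod K)) (by rw [he]; exact h1) h2
    intro i hi
    rcases le_or_gt iq i with hle | hlt
    · have := up (i - iq) (by omega)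
      rwa [show iq + (i - iq) = i by omega] at this
    · have := down (iq - i) (by omega)
      rwa [show iq - (iq - i) = i by omega] at this
  -- maximal rectangle
  set P : ℕ → Prop := fun m => ∃ (x0 : ZMod K) (y0 : ZMod L) (w h : ℕ),
    1 ≤ w ∧ w ≤ K ∧ 1 ≤ h ∧ h ≤ L ∧ w * h = m ∧ rectSet K L x0 y0 w h ⊆ A with hPdef
  have hP1 : P 1 := by
    obtain ⟨v, hv⟩ := hne
    refine ⟨v.1, v.2, 1, 1, le_refl _, by omega, le_refl _, by omega, rfl, ?_⟩
    rintro u ⟨i, j, hi, hj, rfl⟩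
    have hi0 : i = 0 := by omega
    have hj0 : j = 0 := by omega
    subst hi0; subst hj0
    simpa using hv
  have hKL1 : 1 ≤ K * L := Nat.mul_pos (by omega) (by omega)
  have hPm : P (Nat.findGreatest P (K*L)) := Nat.findGreatest_spec hKL1 hP1
  obtain ⟨x0, y0, w, h, hw1, hwK, hh1, hhL, hwh, hsub⟩ := hPm
  refine ⟨x0, y0, w, h, hwK, hhL, ?_⟩
  by_cases hAsub : A ⊆ rectSet K L x0 y0 w h
  · exact Set.Subset.antisymm hAsub hsub
  rw [Set.not_subset] at hAsub
  obtain ⟨z, hzA, hzQ⟩ := hAsub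
  exfalso
  have hq0Q : (x0, y0) ∈ rectSet K L x0 y0 w h := ⟨0, 0, by omega, by omega, by simp⟩
  obtain ⟨q, w', hqQ, hw'Q, hqstep⟩ :=
    exit_step (hconn (x0, y0) (hsub hq0Q) z hzA) hq0Q hzQ
  obtain ⟨hqA, hw'A, hadj⟩ := hqstep
  obtain ⟨iq, jq, hiq, hjq, hqe⟩ := hqQ
  subst hqe
  -- helper to contradict maximality
  have bigger : ∀ (x1 : ZMod K) (y1 : ZMod L) (w1 h1 : ℕ), 1 ≤ w1 → w1 ≤ K → 1 ≤ h1 →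
      h1 ≤ L → w * h < w1 * h1 → rectSet K L x1 y1 w1 h1 ⊆ A → False := by
    intro x1 y1 w1 h1 ha hb hc hd he hf
    have hle : w1 * h1 ≤ K * L := Nat.mul_le_mul hb hd
    have := Nat.findGreatest_is_greatest (P := P) (n := K * L) (k := w1 * h1)
      (by omega) hle
    exact this ⟨x1, y1, w1, h1, ha, hb, hc, hd, rfl, hf⟩
  rcases hadj with hw | hw | hw | hw
  · -- growth to the right
    subst hw
    simp only at hw'Q hw'A
    have hiqw : iq + 1 = w := by
      by_contra hcon
      exact hw'Q ⟨iq+1, jq, by omega, hjq, by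
        refine Prod.ext_iff.mpr ⟨by push_cast; ring, rfl⟩⟩
    have hwK' : w < K := by
      rcases lt_or_eq_of_le hwK with h' | h'
      · exact h'
      exfalso
      apply hw'Q
      refine ⟨0, jq, by omega, hjq, ?_⟩
      have hc : ((iq : ZMod K) + 1) = 0 := by
        have h2 : ((iq + 1 : ℕ) : ZMod K) = 0 := by
          rw [hiqw, h']; exact ZMod.natCast_self K
        push_cast at h2; exact h2
      exact Prod.ext_iff.mpr ⟨by rw [add_assoc, hc]; simp, rfl⟩
    set xo : ZMod K := x0 + ((w-1 : ℕ) : ZMod K) with hxo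
    set xn : ZMod K := x0 + ((w : ℕ) : ZMod K) with hxnd
    have hxn : xn = xo + 1 := by
      rw [hxnd, hxo, Nat.cast_sub hw1]
      push_cast; ring
    have hcol : ∀ j, j < h → (xo, y0 + (j : ZMod L)) ∈ A :=
      fun j hj => hsub ⟨w-1, j, by omega, hj, rfl⟩
    have hz' : (xn, y0 + (jq : ZMod L)) ∈ A := by
      have hc : (x0 + (iq : ZMod K)) + 1 = xn := by
        rw [hxnd, ← hiqw]; push_cast; ring
      rwa [hc] at hw'A
    have c1 : ∀ y : ZMod L, (xn, y) ∈ A → (xo, y + 1) ∈ A → (xn, y + 1) ∈ A := by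
      intro y hy1 hy2
      have := (cornA xo y (by rwa [← hxn]) hy2).2
      rwa [← hxn] at this
    have c2 : ∀ y : ZMod L, (xn, y + 1) ∈ A → (xo, y) ∈ A → (xn, y) ∈ A := by
      intro y hy1 hy2
      have := (cornD xo y hy2 (by rwa [← hxn])).1
      rwa [← hxn] at this
    have hfill := fillCol xo xn y0 h jq hjq hcol hz' c1 c2
    refine bigger x0 y0 (w+1) h (by omega) (by omega) hh1 hhL
      (by have := Nat.mul_lt_mul_of_lt_of_le (show w < w + 1 by omega) (le_refl h) (by omega); omega) ?_
    rintro u ⟨i, j, hi, hj, rfl⟩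
    by_cases hiw : i < w
    · exact hsub ⟨i, j, hiw, hj, rfl⟩
    · have : i = w := by omega
      subst this
      exact hfill j hj
  · -- growth to the left
    subst hw
    simp only at hw'Q hw'A
    have hiq0 : iq = 0 := by
      by_contra hcon
      exact hw'Q ⟨iq-1, jq, by omega, hjq, by
        refine Prod.ext_iff.mpr ⟨?_, rfl⟩
        rw [Nat.cast_sub (show 1 ≤ iq by omega)]
        push_cast; ring⟩
    subst hiq0
    have hwK' : w < K := by
      rcases lt_or_eq_of_le hwK with h' | h'
      · exact h'
      exfalso
      apply hw'Q
      refine ⟨K-1, jq, by omega, hjq, ?_⟩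
      have hc : ((K - 1 : ℕ) : ZMod K) = -1 := by
        rw [Nat.cast_sub (show 1 ≤ K by omega)]
        simp [ZMod.natCast_self]
      refine Prod.ext_iff.mpr ⟨by rw [hc]; push_cast; ring, rfl⟩
    set xo : ZMod K := x0 with hxod
    set xn : ZMod K := x0 - 1 with hxnd
    have hxn : xo = xn + 1 := by rw [hxnd]; ring
    have hcol : ∀ j, j < h → (xo, y0 + (j : ZMod L)) ∈ A := by
      intro j hj
      have := hsub ⟨0, j, by omega, hj, rfl⟩
      simpa using this
    have hz' : (xn, y0 + (jq : ZMod L)) ∈ A := by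
      have hc : (x0 + ((0:ℕ) : ZMod K)) - 1 = xn := by rw [hxnd]; push_cast; ring
      rwa [hc] at hw'A
    have c1 : ∀ y : ZMod L, (xn, y) ∈ A → (xo, y + 1) ∈ A → (xn, y + 1) ∈ A := by
      intro y hy1 hy2
      exact (cornD xn y hy1 (by rwa [← hxn])).2
    have c2 : ∀ y : ZMod L, (xn, y + 1) ∈ A → (xo, y) ∈ A → (xn, y) ∈ A := by
      intro y hy1 hy2
      exact (cornA xn y (by rwa [← hxn]) hy1).1
    have hfill := fillCol xo xn y0 h jq hjq hcol hz' c1 c2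
    refine bigger (x0 - 1) y0 (w+1) h (by omega) (by omega) hh1 hhL
      (by have := Nat.mul_lt_mul_of_lt_of_le (show w < w + 1 by omega) (le_refl h) (by omega); omega) ?_
    rintro u ⟨i, j, hi, hj, rfl⟩
    by_cases hi0 : i = 0
    · subst hi0
      have := hfill j hj
      simpa [hxnd] using this
    · refine hsub ⟨i-1, j, by omega, hj, ?_⟩
      refine Prod.ext_iff.mpr ⟨?_, rfl⟩
      rw [Nat.cast_sub (show 1 ≤ i by omega)]
      push_cast; ring
  · -- growth upward
    subst hw
    simp only at hw'Q hw'A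
    have hjqw : jq + 1 = h := by
      by_contra hcon
      exact hw'Q ⟨iq, jq+1, hiq, by omega, by
        refine Prod.ext_iff.mpr ⟨rfl, by push_cast; ring⟩⟩
    have hhL' : h < L := by
      rcases lt_or_eq_of_le hhL with h' | h'
      · exact h'
      exfalso
      apply hw'Q
      refine ⟨iq, 0, hiq, by omega, ?_⟩
      have hc : ((jq : ZMod L) + 1) = 0 := by
        have h2 : ((jq + 1 : ℕ) : ZMod L) = 0 := by
          rw [hjqw, h']; exact ZMod.natCast_self L
        push_cast at h2; exact h2
      exact Prod.ext_iff.mpr ⟨rfl, by rw [add_assoc, hc]; simp⟩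
    set yo : ZMod L := y0 + ((h-1 : ℕ) : ZMod L) with hyo
    set yn : ZMod L := y0 + ((h : ℕ) : ZMod L) with hynd
    have hyn : yn = yo + 1 := by
      rw [hynd, hyo, Nat.cast_sub hh1]
      push_cast; ring
    have hrow : ∀ i, i < w → (x0 + (i : ZMod K), yo) ∈ A :=
      fun i hi => hsub ⟨i, h-1, hi, by omega, rfl⟩
    have hz' : (x0 + (iq : ZMod K), yn) ∈ A := by
      have hc : (y0 + (jq : ZMod L)) + 1 = yn := by
        rw [hynd, ← hjqw]; push_cast; ring
      rwa [hc] at hw'A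
    have c1 : ∀ x : ZMod K, (x, yn) ∈ A → (x + 1, yo) ∈ A → (x + 1, yn) ∈ A := by
      intro x hy1 hy2
      have := (cornA x yo hy2 (by rwa [← hyn])).2
      rwa [← hyn] at this
    have c2 : ∀ x : ZMod K, (x + 1, yn) ∈ A → (x, yo) ∈ A → (x, yn) ∈ A := by
      intro x hy1 hy2
      have := (cornD x yo hy2 (by rwa [← hyn])).2
      rwa [← hyn] at this
    have hfill := fillRow yo yn x0 w iq hiq hrow hz' c1 c2
    refine bigger x0 y0 w (h+1) hw1 hwK (by omega) (by omega)
      (by have := Nat.mul_lt_mul_of_le_of_lt (le_refl w) (show h < h + 1 by omega) (by omega); omega) ?_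
    rintro u ⟨i, j, hi, hj, rfl⟩
    by_cases hjh : j < h
    · exact hsub ⟨i, j, hi, hjh, rfl⟩
    · have : j = h := by omega
      subst this
      exact hfill i hi
  · -- growth downward
    subst hw
    simp only at hw'Q hw'A
    have hjq0 : jq = 0 := by
      by_contra hcon
      exact hw'Q ⟨iq, jq-1, hiq, by omega, by
        refine Prod.ext_iff.mpr ⟨rfl, ?_⟩
        rw [Nat.cast_sub (show 1 ≤ jq by omega)]
        push_cast; ring⟩
    subst hjq0
    have hhL' : h < L := by
      rcases lt_or_eq_of_le hhL with h' | h'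
      · exact h'
      exfalso
      apply hw'Q
      refine ⟨iq, L-1, hiq, by omega, ?_⟩
      have hc : ((L - 1 : ℕ) : ZMod L) = -1 := by
        rw [Nat.cast_sub (show 1 ≤ L by omega)]
        simp [ZMod.natCast_self]
      refine Prod.ext_iff.mpr ⟨rfl, by rw [hc]; push_cast; ring⟩
    set yo : ZMod L := y0 with hyod
    set yn : ZMod L := y0 - 1 with hynd
    have hyn : yo = yn + 1 := by rw [hynd]; ring
    have hrow : ∀ i, i < w → (x0 + (i : ZMod K), yo) ∈ A := by
      intro i hi
      have := hsub ⟨i, 0, hi, by omega, rfl⟩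
      simpa using this
    have hz' : (x0 + (iq : ZMod K), yn) ∈ A := by
      have hc : (y0 + ((0:ℕ) : ZMod L)) - 1 = yn := by rw [hynd]; push_cast; ring
      rwa [hc] at hw'A
    have c1 : ∀ x : ZMod K, (x, yn) ∈ A → (x + 1, yo) ∈ A → (x + 1, yn) ∈ A := by
      intro x hy1 hy2
      exact (cornD x yn hy1 (by rwa [← hyn])).1
    have c2 : ∀ x : ZMod K, (x + 1, yn) ∈ A → (x, yo) ∈ A → (x, yn) ∈ A := by
      intro x hy1 hy2
      exact (cornA x yn hy1 (by rwa [← hyn])).1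
    have hfill := fillRow yo yn x0 w iq hiq hrow hz' c1 c2
    refine bigger x0 (y0 - 1) w (h+1) hw1 hwK (by omega) (by omega)
      (by have := Nat.mul_lt_mul_of_le_of_lt (le_refl w) (show h < h + 1 by omega) (by omega); omega) ?_
    rintro u ⟨i, j, hi, hj, rfl⟩
    by_cases hj0 : j = 0
    · subst hj0
      have := hfill i hi
      simpa [hynd] using this
    · refine hsub ⟨i, j-1, hi, by omega, ?_⟩
      refine Prod.ext_iff.mpr ⟨rfl, ?_⟩
      rw [Nat.cast_sub (show 1 ≤ j by omega)]
      push_cast; ring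


lemma adj_symm {K L : ℕ} {v w : Vtx K L} (h : Adj K L v w) : Adj K L w v := by
  rcases h with h | h | h | h <;> subst h
  · exact Or.inr (Or.inl (by simp))
  · exact Or.inl (by simp)
  · exact Or.inr (Or.inr (Or.inr (by simp)))
  · exact Or.inr (Or.inr (Or.inl (by simp)))

/-- The energy carried by a single edge whose endpoints have spins `i` and `j`. -/
noncomputable def ee (C : Couplings) (i j : Spin) : ℝ :=
  if i = 0 ∧ j = 0 then -C.J11
  else if i = 1 ∧ j = 1 then -C.J22
  else if i = 2 ∧ j = 2 then -C.J33
  else if (i = 0 ∧ j = 1) ∨ (i = 1 ∧ j = 0) then C.J12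
  else if (i = 0 ∧ j = 2) ∨ (i = 2 ∧ j = 0) then C.J13
  else C.J23

/-- The second endpoint of the edge encoded by `p`. -/
def nbr (K L : ℕ) (p : Vtx K L × Bool) : Vtx K L :=
  if p.2 then (p.1.1 + 1, p.1.2) else (p.1.1, p.1.2 + 1)

lemma ee_comm (C : Couplings) (a b : Spin) : ee C a b = ee C b a := by
  fin_cases a <;> fin_cases b <;> norm_num [ee, Fin.ext_iff]

lemma ee_point (C : Couplings) (a b : Spin) :
    -(C.J11 * (if (a = 0 ∧ b = 0) ∨ (a = 0 ∧ b = 0) then (1:ℝ) else 0)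
      + C.J22 * (if (a = 1 ∧ b = 1) ∨ (a = 1 ∧ b = 1) then (1:ℝ) else 0)
      + C.J33 * (if (a = 2 ∧ b = 2) ∨ (a = 2 ∧ b = 2) then (1:ℝ) else 0))
      + C.J12 * (if (a = 0 ∧ b = 1) ∨ (a = 1 ∧ b = 0) then (1:ℝ) else 0)
      + C.J13 * (if (a = 0 ∧ b = 2) ∨ (a = 2 ∧ b = 0) then (1:ℝ) else 0)
      + C.J23 * (if (a = 1 ∧ b = 2) ∨ (a = 2 ∧ b = 1) then (1:ℝ) else 0)
    = ee C a b := by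
  fin_cases a <;> fin_cases b <;> norm_num [ee, Fin.ext_iff]

lemma H_eq_sum (K L : ℕ) [NeZero K] [NeZero L] (C : Couplings) (σ : Config K L) :
    H K L C σ = ∑ p : Vtx K L × Bool, ee C (σ p.1) (σ (nbr K L p)) := by
  classical
  have hcard : ∀ i j : Spin, ((nEdge K L σ i j : ℕ) : ℝ) =
      ∑ p : Vtx K L × Bool,
        (if (σ p.1 = i ∧ σ (nbr K L p) = j) ∨ (σ p.1 = j ∧ σ (nbr K L p) = i)
         then (1:ℝ) else 0) := by
    intro i j
    rw [nEdge, Finset.card_filter, Nat.cast_sum]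
    apply Finset.sum_congr rfl
    intro p _
    rw [nbr]
    split <;> simp
  rw [H, hcard, hcard, hcard, hcard, hcard, hcard]
  rw [Finset.mul_sum, Finset.mul_sum, Finset.mul_sum, Finset.mul_sum, Finset.mul_sum,
    Finset.mul_sum]
  rw [← Finset.sum_add_distrib, ← Finset.sum_add_distrib, ← Finset.sum_neg_distrib,
    ← Finset.sum_add_distrib, ← Finset.sum_add_distrib, ← Finset.sum_add_distrib]
  exact Finset.sum_congr rfl fun p _ => ee_point C (σ p.1) (σ (nbr K L p))

lemma flip_delta (K L : ℕ) [NeZero K] [NeZero L] (hK : 3 ≤ K) (hL : 3 ≤ L)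
    (C : Couplings) (σ : Config K L) (v : Vtx K L) :
    H K L C (Function.update σ v 0) - H K L C σ =
      (ee C 0 (σ (v.1 + 1, v.2)) - ee C (σ v) (σ (v.1 + 1, v.2)))
      + (ee C 0 (σ (v.1, v.2 + 1)) - ee C (σ v) (σ (v.1, v.2 + 1)))
      + (ee C 0 (σ (v.1 - 1, v.2)) - ee C (σ v) (σ (v.1 - 1, v.2)))
      + (ee C 0 (σ (v.1, v.2 - 1)) - ee C (σ v) (σ (v.1, v.2 - 1))) := by
  classical
  have h1K : (1 : ZMod K) ≠ 0 := one_ne_zero_zmod K (by omega)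
  have h1L : (1 : ZMod L) ≠ 0 := one_ne_zero_zmod L (by omega)
  have hsK : v.1 - 1 ≠ v.1 := fun h => h1K (sub_eq_self.mp h)
  have hsL : v.2 - 1 ≠ v.2 := fun h => h1L (sub_eq_self.mp h)
  have haK : v.1 + 1 ≠ v.1 := fun h => h1K (add_eq_left.mp h)
  have haL : v.2 + 1 ≠ v.2 := fun h => h1L (add_eq_left.mp h)
  have hne1 : ((v.1 + 1, v.2) : Vtx K L) ≠ v := fun h => haK (congrArg Prod.fst h)
  have hne2 : ((v.1, v.2 + 1) : Vtx K L) ≠ v := fun h => haL (congrArg Prod.snd h)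
  have hne3 : ((v.1 - 1, v.2) : Vtx K L) ≠ v := fun h => hsK (congrArg Prod.fst h)
  have hne4 : ((v.1, v.2 - 1) : Vtx K L) ≠ v := fun h => hsL (congrArg Prod.snd h)
  rw [H_eq_sum, H_eq_sum, ← Finset.sum_sub_distrib]
  have hsum : ∑ p : Vtx K L × Bool,
      (ee C (Function.update σ v 0 p.1) (Function.update σ v 0 (nbr K L p))
        - ee C (σ p.1) (σ (nbr K L p))) =
      ∑ p ∈ ({(v, true), (v, false), ((v.1 - 1, v.2), true), ((v.1, v.2 - 1), false)} :
          Finset (Vtx K L × Bool)),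
        (ee C (Function.update σ v 0 p.1) (Function.update σ v 0 (nbr K L p))
          - ee C (σ p.1) (σ (nbr K L p))) := by
    refine (Finset.sum_subset (Finset.subset_univ _) ?_).symm
    intro p _ hp
    simp only [Finset.mem_insert, Finset.mem_singleton] at hp
    push_neg at hp
    obtain ⟨hpa, hpb, hpc, hpd⟩ := hp
    have hp1 : p.1 ≠ v := by
      intro h
      rcases Bool.eq_false_or_eq_true p.2 with h2 | h2
      · exact hpa (Prod.ext_iff.mpr ⟨h, h2⟩)
      · exact hpb (Prod.ext_iff.mpr ⟨h, h2⟩)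
    have hp2 : nbr K L p ≠ v := by
      intro h
      rcases Bool.eq_false_or_eq_true p.2 with h2 | h2
      · rw [nbr, h2, if_pos rfl] at h
        have e1 : p.1.1 + 1 = v.1 := (Prod.ext_iff.mp h).1
        have e2 : p.1.2 = v.2 := (Prod.ext_iff.mp h).2
        apply hpc
        refine Prod.ext_iff.mpr ⟨Prod.ext_iff.mpr ⟨?_, e2⟩, h2⟩
        rw [← e1]; ring
      · rw [nbr, h2] at h
        rw [if_neg (by simp)] at h
        have e1 : p.1.1 = v.1 := (Prod.ext_iff.mp h).1
        have e2 : p.1.2 + 1 = v.2 := (Prod.ext_iff.mp h).2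
        apply hpd
        refine Prod.ext_iff.mpr ⟨Prod.ext_iff.mpr ⟨e1, ?_⟩, h2⟩
        rw [← e2]; ring
    rw [Function.update_of_ne hp1, Function.update_of_ne hp2, sub_self]
  rw [hsum]
  have hm1 : ((v, true) : Vtx K L × Bool) ∉
      ({(v, false), ((v.1 - 1, v.2), true), ((v.1, v.2 - 1), false)} :
        Finset (Vtx K L × Bool)) := by
    simp only [Finset.mem_insert, Finset.mem_singleton]
    push_neg
    refine ⟨by simp, ?_, by simp⟩
    intro h
    exact hsK (congrArg (fun q => q.1.1) h).symm
  have hm2 : ((v, false) : Vtx K L × Bool) ∉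
      ({((v.1 - 1, v.2), true), ((v.1, v.2 - 1), false)} : Finset (Vtx K L × Bool)) := by
    simp only [Finset.mem_insert, Finset.mem_singleton]
    push_neg
    refine ⟨by simp, ?_⟩
    intro h
    exact hsL (congrArg (fun q => q.1.2) h).symm
  have hm3 : (((v.1 - 1, v.2), true) : Vtx K L × Bool) ∉
      ({((v.1, v.2 - 1), false)} : Finset (Vtx K L × Bool)) := by simp
  rw [Finset.sum_insert hm1, Finset.sum_insert hm2, Finset.sum_insert hm3,
    Finset.sum_singleton]
  have hnb1 : nbr K L ((v, true)) = (v.1 + 1, v.2) := by simp [nbr]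
  have hnb2 : nbr K L ((v, false)) = (v.1, v.2 + 1) := by simp [nbr]
  have hnb3 : nbr K L (((v.1 - 1, v.2), true)) = v := by simp [nbr, sub_add_cancel]
  have hnb4 : nbr K L (((v.1, v.2 - 1), false)) = v := by simp [nbr, sub_add_cancel]
  rw [hnb1, hnb2, hnb3, hnb4]
  simp only [Function.update_self, Function.update_of_ne hne1, Function.update_of_ne hne2,
    Function.update_of_ne hne3, Function.update_of_ne hne4]
  rw [ee_comm C (σ (v.1 - 1, v.2)) (0 : Spin), ee_comm C (σ (v.1 - 1, v.2)) (σ v),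
    ee_comm C (σ (v.1, v.2 - 1)) (0 : Spin), ee_comm C (σ (v.1, v.2 - 1)) (σ v)]
  ring

lemma ee_bound (C : Couplings)
    (pos11 : 0 < C.J11) (pos22 : 0 < C.J22) (pos33 : 0 < C.J33)
    (pos12 : 0 < C.J12) (pos13 : 0 < C.J13) (pos23 : 0 < C.J23)
    (h1122 : C.J22 < C.J11) (h2233 : C.J22 = C.J33) (h1213 : C.J12 = C.J13)
    (s t : Spin) (hs : s ≠ 0) : ee C 0 t - ee C s t ≤ C.J12 + C.J22 := by
  fin_cases s
  · exact absurd rfl hs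
  all_goals fin_cases t <;> norm_num [ee, Fin.ext_iff] <;> linarith

lemma ee_zero (C : Couplings) (h1213 : C.J12 = C.J13) (s : Spin) (hs : s ≠ 0) :
    ee C 0 0 - ee C s 0 = -(C.J11 + C.J12) := by
  fin_cases s
  · exact absurd rfl hs
  all_goals norm_num [ee, Fin.ext_iff] <;> linarith

lemma no_two_zero (K L : ℕ) [NeZero K] [NeZero L] (hK : 3 ≤ K) (hL : 3 ≤ L) (C : Couplings)
    (pos11 : 0 < C.J11) (pos22 : 0 < C.J22) (pos33 : 0 < C.J33)
    (pos12 : 0 < C.J12) (pos13 : 0 < C.J13) (pos23 : 0 < C.J23)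
    (h1122 : C.J22 < C.J11) (h2233 : C.J22 = C.J33) (h1213 : C.J12 = C.J13)
    (σ : Config K L) (hσ : σ ∈ Mset K L C ∪ Mbar K L C)
    (v w1 w2 : Vtx K L) (h1 : Adj K L v w1) (h2 : Adj K L v w2) (hne : w1 ≠ w2)
    (hz1 : σ w1 = 0) (hz2 : σ w2 = 0) (hv : σ v ≠ 0) : False := by
  have hdelta := flip_delta K L hK hL C σ v
  have hB := fun t => ee_bound C pos11 pos22 pos33 pos12 pos13 pos23 h1122 h2233 h1213
    (σ v) t hv
  have hZ : ee C 0 0 - ee C (σ v) 0 = -(C.J11 + C.J12) := ee_zero C h1213 (σ v) hv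
  have hlt : H K L C (Function.update σ v 0) < H K L C σ := by
    rcases h1 with e1 | e1 | e1 | e1 <;> rcases h2 with e2 | e2 | e2 | e2 <;>
        (try (exact absurd (e1.trans e2.symm) hne)) <;>
      · rw [e1] at hz1
        rw [e2] at hz2
        rw [hz1, hz2, hZ] at hdelta
        linarith [hB (σ (v.1 + 1, v.2)), hB (σ (v.1, v.2 + 1)), hB (σ (v.1 - 1, v.2)),
          hB (σ (v.1, v.2 - 1))]
  have hflip : SingleFlip K L σ (Function.update σ v 0) := by
    refine ⟨v, ?_, ?_⟩
    · simpa using hv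
    · intro w hw
      exact (Function.update_of_ne hw 0 σ).symm
  rcases hσ with hm | hm
  · exact absurd (hm _ hflip) (not_lt.mpr hlt.le)
  · obtain ⟨D, ⟨hDne, ⟨c, hc⟩, hDconn, hDmin⟩, hσD⟩ := hm
    by_cases hD : Function.update σ v 0 ∈ D
    · have e1 := hc _ hσD
      have e2 := hc _ hD
      rw [e1, e2] at hlt
      exact lt_irrefl _ hlt
    · have := hDmin _ hσD _ hflip hD
      linarith

theorem one_clusters_of_local_minima_are_rectangles
    (K L : ℕ) [NeZero K] [NeZero L] (C : Couplings)
    (hK : 3 ≤ K) (hKL : K ≤ L)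
    (pos11 : 0 < C.J11) (pos22 : 0 < C.J22) (pos33 : 0 < C.J33)
    (pos12 : 0 < C.J12) (pos13 : 0 < C.J13) (pos23 : 0 < C.J23)
    (h1122 : C.J22 < C.J11) (h2233 : C.J22 = C.J33) (h1213 : C.J12 = C.J13)
    (σ : Config K L) (hσ : σ ∈ Mset K L C ∪ Mbar K L C)
    (A : Set (Vtx K L)) (hA : IsCluster K L σ 0 A) :
    IsRectangle K L A := by
  have hL3 : 3 ≤ L := hK.trans hKL
  obtain ⟨hAne, hsp, hconn, hmax⟩ := hA
  refine cluster_rectangle hK hL3 A hAne hconn ?_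
  intro v w1 w2 hw1 hw2 ha1 ha2 hne12
  by_cases hv0 : σ v = 0
  · exact hmax w1 hw1 v (adj_symm ha1) hv0
  · exact absurd (no_two_zero K L hK hL3 C pos11 pos22 pos33 pos12 pos13 pos23
      h1122 h2233 h1213 σ hσ v w1 w2 ha1 ha2 hne12 (hsp w1 hw1) (hsp w2 hw2) hv0) not_false

end GenPotts
end

section
/- The initial cycles are stable under the projection operators: (a) P^{32}C₁ ⊆ C₁ and P^{32}C₂ ⊆ C₂; (b) P^{12}C₂ ⊆ C₂ and P^{12}C₃ ⊆ C₃. -/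
namespace GenPotts

section ListAux

open List

variable {α : Type*} [DecidableEq α]

def dedup2 : List α → List α
  | [] => []
  | [a] => [a]
  | a :: b :: t => if a = b then dedup2 (b :: t) else a :: dedup2 (b :: t)

lemma dedup2_ne_nil : ∀ (l : List α), l ≠ [] → dedup2 l ≠ []
  | [], h => absurd rfl h
  | [a], _ => by simp [dedup2]
  | a :: b :: t, _ => by
      rw [dedup2]
      split
      · exact dedup2_ne_nil (b :: t) (by simp)
      · simp

lemma dedup2_head? : ∀ (l : List α), (dedup2 l).head? = l.head?
  | [] => rfl
  | [a] => rfl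
  | a :: b :: t => by
      rw [dedup2]
      split
      · rename_i h; rw [dedup2_head? (b :: t)]; simp [h]
      · simp

lemma dedup2_getLast? : ∀ (l : List α), (dedup2 l).getLast? = l.getLast?
  | [] => rfl
  | [a] => rfl
  | a :: b :: t => by
      rw [dedup2]
      split
      · rw [dedup2_getLast? (b :: t), List.getLast?_cons_cons]
      · have h1 := dedup2_ne_nil (b :: t) (by simp)
        have h2 := dedup2_getLast? (b :: t)
        rcases hm : dedup2 (b :: t) with _ | ⟨c, t'⟩
        · exact absurd hm h1
        · rw [hm] at h2
          rw [List.getLast?_cons_cons, h2, List.getLast?_cons_cons]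

lemma dedup2_subset : ∀ (l : List α), dedup2 l ⊆ l
  | [] => by simp [dedup2]
  | [a] => by simp [dedup2]
  | a :: b :: t => by
      rw [dedup2]
      split
      · exact List.Subset.trans (dedup2_subset (b :: t)) (List.subset_cons_self a _)
      · exact List.cons_subset_cons a (dedup2_subset (b :: t))

lemma dedup2_chain' (R : α → α → Prop) :
    ∀ (l : List α), List.Chain' (fun x y => x = y ∨ R x y) l → List.Chain' R (dedup2 l)
  | [], _ => by simp [dedup2, List.Chain', List.isChain_nil]
  | [a], _ => by simp [dedup2, List.Chain', List.isChain_singleton]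
  | a :: b :: t, h => by
      simp only [List.Chain', List.isChain_cons_cons] at h
      rw [dedup2]
      split
      · exact dedup2_chain' R (b :: t) h.2
      · rename_i hab
        have hc := dedup2_chain' R (b :: t) h.2
        have hR : R a b := h.1.resolve_left hab
        simp only [List.Chain', List.isChain_cons]
        refine ⟨?_, hc⟩
        intro y hy
        rw [dedup2_head? (b :: t)] at hy
        simp only [List.head?_cons, Option.mem_def, Option.some_inj] at hy
        exact hy ▸ hR

lemma dedup2_head (l : List α) (h : l ≠ []) :
    (dedup2 l).head (dedup2_ne_nil l h) = l.head h := by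
  have h1 := dedup2_head? l
  rwa [List.head?_eq_head (dedup2_ne_nil l h), List.head?_eq_head h, Option.some_inj] at h1

lemma dedup2_getLast (l : List α) (h : l ≠ []) :
    (dedup2 l).getLast (dedup2_ne_nil l h) = l.getLast h := by
  have h1 := dedup2_getLast? l
  rwa [List.getLast?_eq_getLast (dedup2_ne_nil l h), List.getLast?_eq_getLast h,
    Option.some_inj] at h1

end ListAux

section PathAux

variable {K L : ℕ} [NeZero K] [NeZero L]

/-- Build a path from a nonempty list of configurations forming a single-flip chain. -/
def Path.ofList (l : List (Config K L)) (hne : l ≠ [])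
    (hc : l.Chain' (SingleFlip K L)) : Path K L where
  len := l.length - 1
  toFun := fun n => l.getD n (l.head hne)
  step := fun n hn => by
    have h2 : n < l.length := lt_of_lt_of_le hn (Nat.sub_le _ _)
    have h3 : n + 1 < l.length := by omega
    show SingleFlip K L (l.getD n (l.head hne)) (l.getD (n + 1) (l.head hne))
    rw [List.getD_eq_getElem?_getD, List.getD_eq_getElem?_getD,
      List.getElem?_eq_getElem h2, List.getElem?_eq_getElem h3]
    have := List.isChain_iff_getElem.mp hc n (by omega)
    simpa [List.get_eq_getElem] using this

lemma Path.ofList_mem (l : List (Config K L)) (hne : l ≠ [])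
    (hc : l.Chain' (SingleFlip K L)) (n : ℕ) : (Path.ofList l hne hc).toFun n ∈ l := by
  show l.getD n (l.head hne) ∈ l
  rcases lt_or_ge n l.length with h | h
  · rw [List.getD_eq_getElem?_getD, List.getElem?_eq_getElem h]
    exact List.getElem_mem h
  · rw [List.getD_eq_getElem?_getD, List.getElem?_eq_none h]
    exact List.head_mem hne

lemma Path.ofList_zero (l : List (Config K L)) (hne : l ≠ [])
    (hc : l.Chain' (SingleFlip K L)) : (Path.ofList l hne hc).toFun 0 = l.head hne := by
  show l.getD 0 (l.head hne) = l.head hne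
  have h0 : 0 < l.length := List.length_pos_iff.mpr hne
  rw [List.getD_eq_getElem?_getD, List.getElem?_eq_getElem h0]
  exact (List.head_eq_getElem hne).symm

lemma Path.ofList_last (l : List (Config K L)) (hne : l ≠ [])
    (hc : l.Chain' (SingleFlip K L)) :
    (Path.ofList l hne hc).toFun (Path.ofList l hne hc).len = l.getLast hne := by
  show l.getD (l.length - 1) (l.head hne) = l.getLast hne
  have hpos : l.length - 1 < l.length := by
    have := List.length_pos_iff.mpr hne; omega
  rw [List.getD_eq_getElem?_getD, List.getElem?_eq_getElem hpos]
  exact (List.getLast_eq_getElem hne).symm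

/-- From a chain of configurations (allowing stuttering) build a genuine path. -/
lemma exists_path_of_chain (F : ℕ → Config K L) (len : ℕ)
    (hc : ∀ n, n < len → F n = F (n + 1) ∨ SingleFlip K L (F n) (F (n + 1))) :
    ∃ ω : Path K L, ω.toFun 0 = F 0 ∧ ω.toFun ω.len = F len ∧
      ∀ n, ∃ m ≤ len, ω.toFun n = F m := by
  classical
  have hne : (List.range (len + 1)).map F ≠ [] := by simp
  have hhead : ((List.range (len + 1)).map F).head hne = F 0 := by
    have h1 : ((List.range (len + 1)).map F).head? = some (F 0) := by
      rw [List.range_succ_eq_map, List.map_cons, List.head?_cons]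
    rw [List.head?_eq_head hne, Option.some_inj] at h1
    exact h1
  have hlast : ((List.range (len + 1)).map F).getLast hne = F len := by
    have h1 : ((List.range (len + 1)).map F).getLast? = some (F len) := by
      rw [List.range_succ, List.map_append, List.map_cons, List.map_nil,
        List.getLast?_concat]
    rw [List.getLast?_eq_getLast hne, Option.some_inj] at h1
    exact h1
  have hchain : ((List.range (len + 1)).map F).Chain'
      (fun a b => a = b ∨ SingleFlip K L a b) := by
    simp only [List.Chain']
    rw [List.isChain_map, List.isChain_range_succ]
    exact hc
  have hmne : dedup2 ((List.range (len + 1)).map F) ≠ [] := dedup2_ne_nil _ hne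
  have hmc : (dedup2 ((List.range (len + 1)).map F)).Chain' (SingleFlip K L) :=
    dedup2_chain' _ _ hchain
  refine ⟨Path.ofList _ hmne hmc, ?_, ?_, ?_⟩
  · rw [Path.ofList_zero, dedup2_head _ hne, hhead]
  · rw [Path.ofList_last, dedup2_getLast _ hne, hlast]
  · intro n
    have hmem := Path.ofList_mem _ hmne hmc n
    have h2 := dedup2_subset _ hmem
    simp only [List.mem_map, List.mem_range] at h2
    obtain ⟨m, hm, hmeq⟩ := h2
    exact ⟨m, by omega, hmeq.symm⟩

/-- Any two configurations are joined by some path. -/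
lemma exists_fromTo (σ σ' : Config K L) : ∃ ω : Path K L, ω.FromTo σ σ' := by
  classical
  set e := Fintype.equivFin (Vtx K L) with he
  set N := Fintype.card (Vtx K L) with hN
  set F : ℕ → Config K L := fun k v => if (e v : ℕ) < k then σ' v else σ v with hF
  have hc : ∀ n, n < N → F n = F (n + 1) ∨ SingleFlip K L (F n) (F (n + 1)) := by
    intro n hn
    have hoff : ∀ w, w ≠ e.symm ⟨n, hn⟩ → F n w = F (n + 1) w := by
      intro w hw
      have hne : (e w : ℕ) ≠ n := by
        intro hEq
        apply hw
        have : e w = ⟨n, hn⟩ := Fin.ext hEq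
        rw [← this, Equiv.symm_apply_apply]
      by_cases h2 : (e w : ℕ) < n
      · show (if _ then _ else _) = (if _ then _ else _)
        rw [if_pos h2, if_pos (by omega)]
      · show (if _ then _ else _) = (if _ then _ else _)
        rw [if_neg h2, if_neg (by omega)]
    by_cases h : F n = F (n + 1)
    · exact Or.inl h
    · refine Or.inr ⟨e.symm ⟨n, hn⟩, ?_, hoff⟩
      intro heq
      exact h (funext fun w => by
        by_cases hw : w = e.symm ⟨n, hn⟩
        · rw [hw]; exact heq
        · exact hoff w hw)
  obtain ⟨ω, h0, h1, _⟩ := exists_path_of_chain F N hc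
  have hF0 : F 0 = σ := funext fun v => by simp [hF]
  have hFN : F N = σ' := funext fun v => by
    show (if _ then _ else _) = σ' v
    rw [if_pos (e v).isLt]
  exact ⟨ω, by rw [h0, hF0], by rw [h1, hFN]⟩

end PathAux
set_option linter.unusedSectionVars false

section Counting

variable (K L : ℕ) [NeZero K] [NeZero L]

/-- The second endpoint of an edge slot. -/
def nb {K L : ℕ} (p : Vtx K L × Bool) : Vtx K L :=
  if p.2 then (p.1.1 + 1, p.1.2) else (p.1.1, p.1.2 + 1)

lemma nEdge_eq (σ : Config K L) (i j : Spin) :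
    nEdge K L σ i j = ((Finset.univ : Finset (Vtx K L × Bool)).filter (fun p =>
      (σ p.1 = i ∧ σ (nb p) = j) ∨ (σ p.1 = j ∧ σ (nb p) = i))).card := rfl

/-- Indicator of an edge of class `{i,j}`. -/
def sind (i j a b : Spin) : ℕ :=
  if (a = i ∧ b = j) ∨ (a = j ∧ b = i) then 1 else 0

/-- Indicator of a boundary edge of the `0`-region. -/
def bind (a b : Spin) : ℕ :=
  if (a = 0 ∧ ¬ b = 0) ∨ (¬ a = 0 ∧ b = 0) then 1 else 0

/-- Indicator of spin `0`. -/
def vind (a : Spin) : ℕ := if a = 0 then 1 else 0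

/-- Projection of spins, as a map on spin values. -/
def pmap (r s a : Spin) : Spin := if a = r then s else a

lemma proj_apply (r s : Spin) (σ : Config K L) (v : Vtx K L) :
    proj K L r s σ v = pmap r s (σ v) := rfl

lemma nEdge_as_sum (σ : Config K L) (i j : Spin) :
    nEdge K L σ i j = ∑ p : Vtx K L × Bool, sind i j (σ p.1) (σ (nb p)) := by
  rw [nEdge_eq, Finset.card_filter]
  rfl

lemma nVtx_as_sum (σ : Config K L) :
    nVtx K L σ 0 = ∑ v : Vtx K L, vind (σ v) := by
  rw [nVtx, Finset.card_filter]
  rfl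

lemma card_slots : (2 * (K * L)) = ∑ _p : Vtx K L × Bool, 1 := by
  rw [Finset.sum_const, smul_eq_mul, mul_one, Finset.card_univ, Fintype.card_prod,
    Fintype.card_prod, Fintype.card_bool, ZMod.card, ZMod.card]
  ring

lemma nEdge_partition (σ : Config K L) :
    nEdge K L σ 0 0 + nEdge K L σ 1 1 + nEdge K L σ 2 2
      + (nEdge K L σ 0 1 + nEdge K L σ 0 2 + nEdge K L σ 1 2) = 2 * (K * L) := by
  have key : ∀ a b : Spin, sind 0 0 a b + sind 1 1 a b + sind 2 2 a b
      + (sind 0 1 a b + sind 0 2 a b + sind 1 2 a b) = 1 := by decide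
  rw [card_slots]
  simp only [nEdge_as_sum, ← Finset.sum_add_distrib]
  exact Finset.sum_congr rfl fun p _ => key (σ p.1) (σ (nb p))

lemma degree_count (σ : Config K L) :
    4 * nVtx K L σ 0 = 2 * nEdge K L σ 0 0 + nEdge K L σ 0 1 + nEdge K L σ 0 2 := by
  classical
  have shift1 : ∀ f : Vtx K L → ℕ, ∑ v : Vtx K L, f (v.1 + 1, v.2) = ∑ v : Vtx K L, f v :=
    fun f => Fintype.sum_equiv
      (Equiv.prodCongr (Equiv.addRight (1 : ZMod K)) (Equiv.refl (ZMod L))) _ _ (fun v => rfl)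
  have shift2 : ∀ f : Vtx K L → ℕ, ∑ v : Vtx K L, f (v.1, v.2 + 1) = ∑ v : Vtx K L, f v :=
    fun f => Fintype.sum_equiv
      (Equiv.prodCongr (Equiv.refl (ZMod K)) (Equiv.addRight (1 : ZMod L))) _ _ (fun v => rfl)
  have key2 : ∑ p : Vtx K L × Bool, (vind (σ p.1) + vind (σ (nb p))) = 4 * nVtx K L σ 0 := by
    rw [Finset.sum_add_distrib]
    have e1 : ∑ p : Vtx K L × Bool, vind (σ p.1) = 2 * nVtx K L σ 0 := by
      rw [Fintype.sum_prod_type]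
      have : ∀ v : Vtx K L, (∑ _b : Bool, vind (σ v)) = 2 * vind (σ v) := fun v => by
        rw [Finset.sum_const, smul_eq_mul, Finset.card_univ, Fintype.card_bool]
      rw [Finset.sum_congr rfl fun v _ => this v, ← Finset.mul_sum, nVtx_as_sum]
    have e2 : ∑ p : Vtx K L × Bool, vind (σ (nb p)) = 2 * nVtx K L σ 0 := by
      rw [Fintype.sum_prod_type]
      have : ∀ v : Vtx K L, (∑ b : Bool, vind (σ (nb (v, b))))
          = vind (σ (v.1 + 1, v.2)) + vind (σ (v.1, v.2 + 1)) := by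
        intro v
        rw [Fintype.sum_bool]
        rfl
      rw [Finset.sum_congr rfl fun v _ => this v, Finset.sum_add_distrib,
        shift1 (fun w => vind (σ w)), shift2 (fun w => vind (σ w)), nVtx_as_sum]
      ring
    rw [e1, e2]; ring
  have key : ∀ a b : Spin, vind a + vind b
      = 2 * sind 0 0 a b + sind 0 1 a b + sind 0 2 a b := by decide
  rw [← key2]
  simp only [nEdge_as_sum, Finset.mul_sum, ← Finset.sum_add_distrib]
  exact Finset.sum_congr rfl fun p _ => key (σ p.1) (σ (nb p))

lemma bd_card (σ : Config K L) :
    ((Finset.univ : Finset (Vtx K L × Bool)).filter (fun p =>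
      (σ p.1 = 0 ∧ ¬ σ (nb p) = 0) ∨ (¬ σ p.1 = 0 ∧ σ (nb p) = 0))).card
      = nEdge K L σ 0 1 + nEdge K L σ 0 2 := by
  have key : ∀ a b : Spin, bind a b = sind 0 1 a b + sind 0 2 a b := by decide
  rw [Finset.card_filter]
  simp only [nEdge_as_sum, ← Finset.sum_add_distrib]
  exact Finset.sum_congr rfl fun p _ => key (σ p.1) (σ (nb p))

lemma nVtx_const_eq_zero (r : Spin) (hr : r ≠ 0) : nVtx K L (const K L r) 0 = 0 := by
  rw [nVtx, Finset.filter_false_of_mem, Finset.card_empty]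
  intro v _
  exact hr

lemma nVtx_flip_le {σ σ' : Config K L} (h : SingleFlip K L σ σ') :
    nVtx K L σ' 0 ≤ nVtx K L σ 0 + 1 := by
  classical
  obtain ⟨v, _, hoff⟩ := h
  have hsub : (Finset.univ.filter (fun w => σ' w = 0))
      ⊆ insert v (Finset.univ.filter (fun w => σ w = 0)) := by
    intro w hw
    rw [Finset.mem_filter] at hw
    rcases eq_or_ne w v with hwv | hwv
    · rw [hwv]; exact Finset.mem_insert_self v _
    · exact Finset.mem_insert_of_mem (Finset.mem_filter.mpr ⟨Finset.mem_univ _,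
        (hoff w hwv).trans hw.2⟩)
  calc nVtx K L σ' 0 ≤ (insert v (Finset.univ.filter (fun w => σ w = 0))).card :=
        Finset.card_le_card hsub
    _ ≤ nVtx K L σ 0 + 1 := Finset.card_insert_le _ _

end Counting
section ProjCounting

variable (K L : ℕ) [NeZero K] [NeZero L]

lemma nEdge_proj_as_sum (r s : Spin) (σ : Config K L) (i j : Spin) :
    nEdge K L (proj K L r s σ) i j
      = ∑ p : Vtx K L × Bool, sind i j (pmap r s (σ p.1)) (pmap r s (σ (nb p))) := by
  rw [nEdge_as_sum]
  rfl

lemma p32_00 (σ : Config K L) : nEdge K L (proj K L 2 1 σ) 0 0 = nEdge K L σ 0 0 := by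
  have key : ∀ a b : Spin, sind 0 0 (pmap 2 1 a) (pmap 2 1 b) = sind 0 0 a b := by decide
  rw [nEdge_proj_as_sum, nEdge_as_sum]
  exact Finset.sum_congr rfl fun p _ => key (σ p.1) (σ (nb p))

lemma p32_11 (σ : Config K L) : nEdge K L (proj K L 2 1 σ) 1 1
    = nEdge K L σ 1 1 + nEdge K L σ 2 2 + nEdge K L σ 1 2 := by
  have key : ∀ a b : Spin, sind 1 1 (pmap 2 1 a) (pmap 2 1 b)
      = sind 1 1 a b + sind 2 2 a b + sind 1 2 a b := by decide
  rw [nEdge_proj_as_sum]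
  simp only [nEdge_as_sum, ← Finset.sum_add_distrib]
  exact Finset.sum_congr rfl fun p _ => key (σ p.1) (σ (nb p))

lemma p32_01 (σ : Config K L) : nEdge K L (proj K L 2 1 σ) 0 1
    = nEdge K L σ 0 1 + nEdge K L σ 0 2 := by
  have key : ∀ a b : Spin, sind 0 1 (pmap 2 1 a) (pmap 2 1 b)
      = sind 0 1 a b + sind 0 2 a b := by decide
  rw [nEdge_proj_as_sum]
  simp only [nEdge_as_sum, ← Finset.sum_add_distrib]
  exact Finset.sum_congr rfl fun p _ => key (σ p.1) (σ (nb p))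

lemma p32_22 (σ : Config K L) : nEdge K L (proj K L 2 1 σ) 2 2 = 0 := by
  have key : ∀ a b : Spin, sind 2 2 (pmap 2 1 a) (pmap 2 1 b) = 0 := by decide
  rw [nEdge_proj_as_sum]
  exact Finset.sum_eq_zero fun p _ => key (σ p.1) (σ (nb p))

lemma p32_02 (σ : Config K L) : nEdge K L (proj K L 2 1 σ) 0 2 = 0 := by
  have key : ∀ a b : Spin, sind 0 2 (pmap 2 1 a) (pmap 2 1 b) = 0 := by decide
  rw [nEdge_proj_as_sum]
  exact Finset.sum_eq_zero fun p _ => key (σ p.1) (σ (nb p))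

lemma p32_12 (σ : Config K L) : nEdge K L (proj K L 2 1 σ) 1 2 = 0 := by
  have key : ∀ a b : Spin, sind 1 2 (pmap 2 1 a) (pmap 2 1 b) = 0 := by decide
  rw [nEdge_proj_as_sum]
  exact Finset.sum_eq_zero fun p _ => key (σ p.1) (σ (nb p))

lemma p12_11 (σ : Config K L) : nEdge K L (proj K L 0 1 σ) 1 1
    = nEdge K L σ 1 1 + nEdge K L σ 0 0 + nEdge K L σ 0 1 := by
  have key : ∀ a b : Spin, sind 1 1 (pmap 0 1 a) (pmap 0 1 b)
      = sind 1 1 a b + sind 0 0 a b + sind 0 1 a b := by decide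
  rw [nEdge_proj_as_sum]
  simp only [nEdge_as_sum, ← Finset.sum_add_distrib]
  exact Finset.sum_congr rfl fun p _ => key (σ p.1) (σ (nb p))

lemma p12_22 (σ : Config K L) : nEdge K L (proj K L 0 1 σ) 2 2 = nEdge K L σ 2 2 := by
  have key : ∀ a b : Spin, sind 2 2 (pmap 0 1 a) (pmap 0 1 b) = sind 2 2 a b := by decide
  rw [nEdge_proj_as_sum, nEdge_as_sum]
  exact Finset.sum_congr rfl fun p _ => key (σ p.1) (σ (nb p))

lemma p12_12 (σ : Config K L) : nEdge K L (proj K L 0 1 σ) 1 2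
    = nEdge K L σ 1 2 + nEdge K L σ 0 2 := by
  have key : ∀ a b : Spin, sind 1 2 (pmap 0 1 a) (pmap 0 1 b)
      = sind 1 2 a b + sind 0 2 a b := by decide
  rw [nEdge_proj_as_sum]
  simp only [nEdge_as_sum, ← Finset.sum_add_distrib]
  exact Finset.sum_congr rfl fun p _ => key (σ p.1) (σ (nb p))

lemma p12_00 (σ : Config K L) : nEdge K L (proj K L 0 1 σ) 0 0 = 0 := by
  have key : ∀ a b : Spin, sind 0 0 (pmap 0 1 a) (pmap 0 1 b) = 0 := by decide
  rw [nEdge_proj_as_sum]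
  exact Finset.sum_eq_zero fun p _ => key (σ p.1) (σ (nb p))

lemma p12_01 (σ : Config K L) : nEdge K L (proj K L 0 1 σ) 0 1 = 0 := by
  have key : ∀ a b : Spin, sind 0 1 (pmap 0 1 a) (pmap 0 1 b) = 0 := by decide
  rw [nEdge_proj_as_sum]
  exact Finset.sum_eq_zero fun p _ => key (σ p.1) (σ (nb p))

lemma p12_02 (σ : Config K L) : nEdge K L (proj K L 0 1 σ) 0 2 = 0 := by
  have key : ∀ a b : Spin, sind 0 2 (pmap 0 1 a) (pmap 0 1 b) = 0 := by decide
  rw [nEdge_proj_as_sum]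
  exact Finset.sum_eq_zero fun p _ => key (σ p.1) (σ (nb p))

lemma nEdge_const (r i j : Spin) :
    nEdge K L (const K L r) i j
      = if (r = i ∧ r = j) ∨ (r = j ∧ r = i) then 2 * (K * L) else 0 := by
  classical
  rw [nEdge_eq]
  split
  · rename_i h
    have hall : ∀ p ∈ (Finset.univ : Finset (Vtx K L × Bool)),
        (const K L r p.1 = i ∧ const K L r (nb p) = j)
          ∨ (const K L r p.1 = j ∧ const K L r (nb p) = i) := fun p _ => h
    rw [Finset.filter_true_of_mem hall, Finset.card_univ, Fintype.card_prod,
      Fintype.card_prod, Fintype.card_bool, ZMod.card, ZMod.card]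
    ring
  · rename_i h
    have hall : ∀ p ∈ (Finset.univ : Finset (Vtx K L × Bool)),
        ¬((const K L r p.1 = i ∧ const K L r (nb p) = j)
          ∨ (const K L r p.1 = j ∧ const K L r (nb p) = i)) := fun p _ => h
    rw [Finset.filter_false_of_mem hall, Finset.card_empty]

lemma H_const1 (C : Couplings) :
    H K L C (const K L 1) = -(C.J22 * (2 * (K * L))) := by
  simp only [H]
  rw [nEdge_const K L 1 0 0, nEdge_const K L 1 1 1, nEdge_const K L 1 2 2,
    nEdge_const K L 1 0 1, nEdge_const K L 1 0 2, nEdge_const K L 1 1 2,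
    if_neg (by decide), if_pos (by decide), if_neg (by decide), if_neg (by decide),
    if_neg (by decide), if_neg (by decide)]
  push_cast
  ring

lemma H_proj32_le (C : Couplings) (h2233 : C.J22 = C.J33) (h1213 : C.J12 = C.J13)
    (hγ : 0 ≤ C.J23 + C.J22) (σ : Config K L) :
    H K L C (proj K L 2 1 σ) ≤ H K L C σ := by
  simp only [H]
  rw [p32_00, p32_11, p32_22, p32_01, p32_02, p32_12]
  push_cast
  rw [← h2233, ← h1213]
  have h12 : (0 : ℝ) ≤ (nEdge K L σ 1 2 : ℝ) := Nat.cast_nonneg _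
  nlinarith [mul_nonneg hγ h12]

lemma H_proj12_eq (C : Couplings) (h2233 : C.J22 = C.J33) (σ : Config K L) :
    H K L C (proj K L 0 1 σ)
      = -(C.J22 * (2 * (K * L)))
        + (C.J23 + C.J22) * ((nEdge K L σ 0 2 : ℝ) + (nEdge K L σ 1 2 : ℝ)) := by
  have hpart := nEdge_partition K L σ
  have hpartR : (nEdge K L σ 0 0 : ℝ) + nEdge K L σ 1 1 + nEdge K L σ 2 2
      + (nEdge K L σ 0 1 + nEdge K L σ 0 2 + nEdge K L σ 1 2) = 2 * ((K : ℝ) * L) := by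
    exact_mod_cast congrArg (Nat.cast : ℕ → ℝ) hpart
  have hm : C.J22 * ((nEdge K L σ 0 0 : ℝ) + nEdge K L σ 1 1 + nEdge K L σ 2 2
      + (nEdge K L σ 0 1 + nEdge K L σ 0 2 + nEdge K L σ 1 2))
      = C.J22 * (2 * ((K : ℝ) * L)) := by rw [hpartR]
  simp only [H]
  rw [p12_00, p12_11, p12_22, p12_01, p12_02, p12_12]
  push_cast
  rw [← h2233]
  linarith [hm]

end ProjCounting
section Isoperimetry

lemma cyclic_succ {n : ℕ} [NeZero n] (T : Finset (ZMod n)) (h1 : T.Nonempty)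
    (h2 : T ≠ Finset.univ) : ∃ y, y ∈ T ∧ y + 1 ∉ T := by
  by_contra hcon
  push_neg at hcon
  obtain ⟨y0, hy0⟩ := h1
  have hall : ∀ m : ℕ, y0 + (m : ZMod n) ∈ T := by
    intro m
    induction m with
    | zero => simpa using hy0
    | succ k ih =>
        have h := hcon _ ih
        have : ((k + 1 : ℕ) : ZMod n) = (k : ZMod n) + 1 := by push_cast; ring
        rw [this, ← add_assoc]
        exact h
  apply h2
  ext z
  simp only [Finset.mem_univ, iff_true]
  have h := hall (z - y0).val
  rwa [ZMod.natCast_rightInverse (z - y0), add_comm, sub_add_cancel] at h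

lemma cyclic_pred {n : ℕ} [NeZero n] (T : Finset (ZMod n)) (h1 : T.Nonempty)
    (h2 : T ≠ Finset.univ) : ∃ y, y ∉ T ∧ y + 1 ∈ T := by
  have hc1 : Tᶜ.Nonempty :=
    Finset.nonempty_iff_ne_empty.mpr (fun h => h2 ((Finset.compl_eq_empty_iff T).mp h))
  have hc2 : Tᶜ ≠ Finset.univ := by
    intro h
    obtain ⟨y0, hy0⟩ := h1
    have : y0 ∈ Tᶜ := h ▸ Finset.mem_univ _
    exact absurd hy0 (Finset.mem_compl.mp this)
  obtain ⟨y, hy1, hy2⟩ := cyclic_succ Tᶜ hc1 hc2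
  exact ⟨y, Finset.mem_compl.mp hy1, by simpa using hy2⟩

variable (K L : ℕ) [NeZero K] [NeZero L]

lemma spin_ne_zero (a : Spin) (h : a ≠ 0) : a = 1 ∨ a = 2 := by
  fin_cases a <;> simp_all

lemma isoperimetric (σ : Config K L) (h1 : 0 < nVtx K L σ 0)
    (hKb : nVtx K L σ 0 < K) (hLb : nVtx K L σ 0 < L) :
    ∃ c r : ℕ, nVtx K L σ 0 ≤ c * r ∧ 0 < c ∧ 0 < r ∧
      2 * (c + r) ≤ nEdge K L σ 0 1 + nEdge K L σ 0 2 := by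
  classical
  set S : Finset (Vtx K L) := Finset.univ.filter (fun v => σ v = 0) with hS
  have hnVtx : nVtx K L σ 0 = S.card := rfl
  have hSne : S.Nonempty := Finset.card_pos.mp (hnVtx ▸ h1)
  set cols := S.image Prod.fst with hcols
  set rows := S.image Prod.snd with hrows
  obtain ⟨v0, hv0⟩ := hSne
  have hcolsne : 0 < cols.card :=
    Finset.card_pos.mpr ⟨v0.1, Finset.mem_image_of_mem _ hv0⟩
  have hrowsne : 0 < rows.card :=
    Finset.card_pos.mpr ⟨v0.2, Finset.mem_image_of_mem _ hv0⟩
  refine ⟨cols.card, rows.card, ?_, hcolsne, hrowsne, ?_⟩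
  · have hsub : S ⊆ cols ×ˢ rows := fun v hv =>
      Finset.mem_product.mpr ⟨Finset.mem_image_of_mem _ hv, Finset.mem_image_of_mem _ hv⟩
    calc nVtx K L σ 0 = S.card := hnVtx
      _ ≤ (cols ×ˢ rows).card := Finset.card_le_card hsub
      _ = cols.card * rows.card := Finset.card_product _ _
  · set Bd := ((Finset.univ : Finset (Vtx K L × Bool)).filter (fun p =>
      (σ p.1 = 0 ∧ ¬ σ (nb p) = 0) ∨ (¬ σ p.1 = 0 ∧ σ (nb p) = 0))) with hBd
    have hcard : Bd.card = nEdge K L σ 0 1 + nEdge K L σ 0 2 := bd_card K L σ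
    rw [← hcard]
    set BdV := Bd.filter (fun p => p.2 = false) with hBdV
    set BdH := Bd.filter (fun p => p.2 = true) with hBdH
    have hsplit : BdV.card + BdH.card ≤ Bd.card := by
      have hdisj : Disjoint BdV BdH := by
        rw [Finset.disjoint_left]
        intro p hp hp'
        rw [hBdV, Finset.mem_filter] at hp
        rw [hBdH, Finset.mem_filter] at hp'
        rw [hp.2] at hp'
        exact absurd hp'.2 (by simp)
      rw [← Finset.card_union_of_disjoint hdisj]
      exact Finset.card_le_card (Finset.union_subset (Finset.filter_subset _ _)
        (Finset.filter_subset _ _))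
    have hV : 2 * cols.card ≤ BdV.card := by
      have hfib : ∀ p ∈ BdV, p.1.1 ∈ cols := by
        intro p hp
        rw [hBdV, Finset.mem_filter] at hp
        obtain ⟨hpBd, hpb⟩ := hp
        rw [hBd, Finset.mem_filter] at hpBd
        have hnbp : nb p = (p.1.1, p.1.2 + 1) := by rw [nb, hpb]; simp
        rcases hpBd.2 with ⟨ha, _⟩ | ⟨_, hb⟩
        · exact Finset.mem_image_of_mem _ (by rw [hS]; simp [ha])
        · rw [hnbp] at hb
          have : (p.1.1, p.1.2 + 1) ∈ S := by rw [hS]; simp [hb]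
          exact Finset.mem_image.mpr ⟨_, this, rfl⟩
      rw [Finset.card_eq_sum_card_fiberwise hfib]
      have hfib2 : ∀ x ∈ cols, 2 ≤ (BdV.filter (fun p => p.1.1 = x)).card := by
        intro x hx
        obtain ⟨v, hvS, hv1⟩ := Finset.mem_image.mp hx
        set T : Finset (ZMod L) := Finset.univ.filter (fun y => σ (x, y) = 0) with hT
        have hTne : T.Nonempty := by
          refine ⟨v.2, ?_⟩
          rw [hT, Finset.mem_filter]
          refine ⟨Finset.mem_univ _, ?_⟩
          have : (x, v.2) = v := by rw [← hv1]
          rw [this]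
          rw [hS, Finset.mem_filter] at hvS
          exact hvS.2
        have hTne' : T ≠ Finset.univ := by
          intro hTU
          have hinj : T.card ≤ S.card := by
            apply Finset.card_le_card_of_injOn (fun y => (x, y))
            · intro y hy
              rw [hT, Finset.mem_coe, Finset.mem_filter] at hy
              rw [hS, Finset.mem_coe, Finset.mem_filter]
              exact ⟨Finset.mem_univ _, hy.2⟩
            · intro a _ b _ hab
              exact (Prod.mk.injEq _ _ _ _).mp hab |>.2
          rw [hTU, Finset.card_univ, ZMod.card] at hinj
          have := lt_of_le_of_lt hinj (hnVtx ▸ hLb)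
          omega
        obtain ⟨y1, hy1T, hy1'⟩ := cyclic_succ T hTne hTne'
        obtain ⟨y2, hy2T, hy2'⟩ := cyclic_pred T hTne hTne'
        have hmem : ∀ y : ZMod L, (σ (x, y) = 0 ∧ ¬ σ (x, y + 1) = 0)
            ∨ (¬ σ (x, y) = 0 ∧ σ (x, y + 1) = 0) →
            ((x, y), false) ∈ BdV.filter (fun p => p.1.1 = x) := by
          intro y hy
          rw [Finset.mem_filter, hBdV, Finset.mem_filter, hBd, Finset.mem_filter]
          refine ⟨⟨⟨Finset.mem_univ _, ?_⟩, rfl⟩, rfl⟩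
          have : nb ((x, y), false) = (x, y + 1) := by rw [nb]; simp
          rw [this]
          exact hy
        have hmemT : ∀ y : ZMod L, (y ∈ T ↔ σ (x, y) = 0) := by
          intro y; rw [hT, Finset.mem_filter]; simp
        have h1mem := hmem y1 (Or.inl ⟨(hmemT y1).mp hy1T, fun hc => hy1' ((hmemT _).mpr hc)⟩)
        have h2mem := hmem y2 (Or.inr ⟨fun hc => hy2T ((hmemT _).mpr hc), (hmemT _).mp hy2'⟩)
        have hne : ((x, y1), false) ≠ ((x, y2), false) := by
          intro hEq
          have : y1 = y2 := by
            have := congrArg (fun q => q.1.2) hEq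
            exact this
          exact hy2T (this ▸ hy1T)
        have := Finset.one_lt_card.mpr ⟨_, h1mem, _, h2mem, hne⟩
        omega
      calc 2 * cols.card = ∑ _x ∈ cols, 2 := by
            rw [Finset.sum_const, smul_eq_mul, mul_comm]
        _ ≤ ∑ x ∈ cols, (BdV.filter (fun p => p.1.1 = x)).card :=
            Finset.sum_le_sum hfib2
    have hH : 2 * rows.card ≤ BdH.card := by
      have hfib : ∀ p ∈ BdH, p.1.2 ∈ rows := by
        intro p hp
        rw [hBdH, Finset.mem_filter] at hp
        obtain ⟨hpBd, hpb⟩ := hp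
        rw [hBd, Finset.mem_filter] at hpBd
        have hnbp : nb p = (p.1.1 + 1, p.1.2) := by rw [nb, hpb]; simp
        rcases hpBd.2 with ⟨ha, _⟩ | ⟨_, hb⟩
        · exact Finset.mem_image_of_mem _ (by rw [hS]; simp [ha])
        · rw [hnbp] at hb
          have : (p.1.1 + 1, p.1.2) ∈ S := by rw [hS]; simp [hb]
          exact Finset.mem_image.mpr ⟨_, this, rfl⟩
      rw [Finset.card_eq_sum_card_fiberwise hfib]
      have hfib2 : ∀ y ∈ rows, 2 ≤ (BdH.filter (fun p => p.1.2 = y)).card := by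
        intro y hy
        obtain ⟨v, hvS, hv2⟩ := Finset.mem_image.mp hy
        set T : Finset (ZMod K) := Finset.univ.filter (fun x => σ (x, y) = 0) with hT
        have hTne : T.Nonempty := by
          refine ⟨v.1, ?_⟩
          rw [hT, Finset.mem_filter]
          refine ⟨Finset.mem_univ _, ?_⟩
          have : (v.1, y) = v := by rw [← hv2]
          rw [this]
          rw [hS, Finset.mem_filter] at hvS
          exact hvS.2
        have hTne' : T ≠ Finset.univ := by
          intro hTU
          have hinj : T.card ≤ S.card := by
            apply Finset.card_le_card_of_injOn (fun x => (x, y))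
            · intro a ha
              rw [hT, Finset.mem_coe, Finset.mem_filter] at ha
              rw [hS, Finset.mem_coe, Finset.mem_filter]
              exact ⟨Finset.mem_univ _, ha.2⟩
            · intro a _ b _ hab
              exact (Prod.mk.injEq _ _ _ _).mp hab |>.1
          rw [hTU, Finset.card_univ, ZMod.card] at hinj
          have := lt_of_le_of_lt hinj (hnVtx ▸ hKb)
          omega
        obtain ⟨x1, hx1T, hx1'⟩ := cyclic_succ T hTne hTne'
        obtain ⟨x2, hx2T, hx2'⟩ := cyclic_pred T hTne hTne'
        have hmem : ∀ x : ZMod K, (σ (x, y) = 0 ∧ ¬ σ (x + 1, y) = 0)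
            ∨ (¬ σ (x, y) = 0 ∧ σ (x + 1, y) = 0) →
            ((x, y), true) ∈ BdH.filter (fun p => p.1.2 = y) := by
          intro x hx
          rw [Finset.mem_filter, hBdH, Finset.mem_filter, hBd, Finset.mem_filter]
          refine ⟨⟨⟨Finset.mem_univ _, ?_⟩, rfl⟩, rfl⟩
          have : nb ((x, y), true) = (x + 1, y) := by rw [nb]; simp
          rw [this]
          exact hx
        have hmemT : ∀ x : ZMod K, (x ∈ T ↔ σ (x, y) = 0) := by
          intro x; rw [hT, Finset.mem_filter]; simp
        have h1mem := hmem x1 (Or.inl ⟨(hmemT x1).mp hx1T, fun hc => hx1' ((hmemT _).mpr hc)⟩)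
        have h2mem := hmem x2 (Or.inr ⟨fun hc => hx2T ((hmemT _).mpr hc), (hmemT _).mp hx2'⟩)
        have hne : ((x1, y), true) ≠ ((x2, y), true) := by
          intro hEq
          have : x1 = x2 := by
            have := congrArg (fun q => q.1.1) hEq
            exact this
          exact hx2T (this ▸ hx1T)
        have := Finset.one_lt_card.mpr ⟨_, h1mem, _, h2mem, hne⟩
        omega
      calc 2 * rows.card = ∑ _y ∈ rows, 2 := by
            rw [Finset.sum_const, smul_eq_mul, mul_comm]
        _ ≤ ∑ y ∈ rows, (BdH.filter (fun p => p.1.2 = y)).card :=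
            Finset.sum_le_sum hfib2
    omega

end Isoperimetry
section RealArith

variable {C : Couplings}

lemma gamma1_pos (h : C.J22 < C.J11) : 0 < C.γ1 := sub_pos.mpr h

lemma lstar_ge_two (K L : ℕ) (hadm : Admissible K L C) : 2 ≤ lstar C := by
  have hγ1 : 0 < C.γ1 := gamma1_pos hadm.h1122
  have hγ23 : 0 < C.γ23 := by
    have h1 := hadm.pos23; have h2 := hadm.pos22
    unfold Couplings.γ23; linarith
  have ht : (1 : ℝ) < (2 * C.γ12 + C.γ1) / (2 * C.γ1) := by
    rw [lt_div_iff₀ (by linarith)]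
    have := hadm.hC
    linarith
  exact Nat.lt_ceil.mpr (by exact_mod_cast ht)

lemma lstar_mul_lt (K L : ℕ) (hadm : Admissible K L C) :
    C.γ1 * (lstar C : ℝ) < C.γ12 + 3 / 2 * C.γ1 := by
  have hγ1 : 0 < C.γ1 := gamma1_pos hadm.h1122
  have hγ12 : 0 < C.γ12 := by
    have h1 := hadm.pos12; have h2 := hadm.pos22
    unfold Couplings.γ12; linarith
  have ht0 : (0 : ℝ) ≤ (2 * C.γ12 + C.γ1) / (2 * C.γ1) := by positivity
  have hlt := Nat.ceil_lt_add_one ht0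
  have hℓ : (lstar C : ℝ) < (2 * C.γ12 + C.γ1) / (2 * C.γ1) + 1 := hlt
  have hmul : ((2 * C.γ12 + C.γ1) / (2 * C.γ1) + 1) * C.γ1 = C.γ12 + 3 / 2 * C.γ1 := by
    field_simp
    ring
  calc C.γ1 * (lstar C : ℝ) = (lstar C : ℝ) * C.γ1 := by ring
    _ < ((2 * C.γ12 + C.γ1) / (2 * C.γ1) + 1) * C.γ1 := by
        exact mul_lt_mul_of_pos_right hℓ hγ1
    _ = C.γ12 + 3 / 2 * C.γ1 := hmul

lemma Gammastar_eq (K L : ℕ) (hadm : Admissible K L C) :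
    Γstar C = (2 * C.γ1 + 4 * C.γ12) * (lstar C : ℝ)
      - 2 * C.γ1 * ((lstar C : ℝ) ^ 2 - (lstar C : ℝ) + 1) := by
  have hγ1 : 0 < C.γ1 := gamma1_pos hadm.h1122
  have hγ12 : 0 < C.γ12 := by
    have h1 := hadm.pos12; have h2 := hadm.pos22
    unfold Couplings.γ12; linarith
  have harg : (C.γ12 + C.γ1 / 2) / C.γ1 = (2 * C.γ12 + C.γ1) / (2 * C.γ1) := by
    rw [div_eq_div_iff (by positivity) (by positivity)]
    ring
  have hcast : ((⌈(C.γ12 + C.γ1 / 2) / C.γ1⌉ : ℤ) : ℝ) = (lstar C : ℝ) := by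
    rw [harg, lstar]
    exact (natCast_ceil_eq_intCast_ceil (by positivity)).symm
  unfold Γstar fh
  rw [hcast]
  ring

end RealArith

section MainEstimates

variable (K L : ℕ) [NeZero K] [NeZero L] (C : Couplings)

lemma vc_lt_K (hadm : Admissible K L C) : lstar C * (lstar C - 1) + 1 < K := by
  have hl2 : 2 ≤ lstar C := lstar_ge_two K L hadm
  have hK := hadm.hK
  have h1 : lstar C * (lstar C - 1) ≤ lstar C * lstar C :=
    Nat.mul_le_mul_left _ (Nat.sub_le _ _)
  have h4 : 4 ≤ lstar C * lstar C := Nat.mul_le_mul hl2 hl2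
  have h5 : lstar C ^ 2 = lstar C * lstar C := by ring
  omega

set_option maxHeartbeats 1000000 in
lemma crit_lower (hadm : Admissible K L C) (σ : Config K L)
    (hV : nVtx K L σ 0 = lstar C * (lstar C - 1) + 1) :
    H K L C (const K L 1) + Γstar C ≤ H K L C σ := by
  have hγ1 : 0 < C.γ1 := gamma1_pos hadm.h1122
  have hγ12 : 0 < C.γ12 := by
    have h1 := hadm.pos12; have h2 := hadm.pos22
    unfold Couplings.γ12; linarith
  have hγ23 : 0 < C.γ23 := by
    have h1 := hadm.pos23; have h2 := hadm.pos22
    unfold Couplings.γ23; linarith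
  have hl2 : 2 ≤ lstar C := lstar_ge_two K L hadm
  have hvK : lstar C * (lstar C - 1) + 1 < K := vc_lt_K K L C hadm
  have hvL : lstar C * (lstar C - 1) + 1 < L := lt_of_lt_of_le hvK hadm.hKL
  obtain ⟨c, r, hcr, hc0, hr0, hP⟩ := isoperimetric K L σ (by omega) (by omega) (by omega)
  rw [hV] at hcr
  -- c + r ≥ 2 ℓ*
  have hs : 2 * lstar C ≤ c + r := by
    by_contra hcon
    push_neg at hcon
    have hcrZ : ((lstar C : ℤ) * ((lstar C : ℤ) - 1) + 1) ≤ (c : ℤ) * r := by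
      have := hcr
      have hcast : ((lstar C * (lstar C - 1) + 1 : ℕ) : ℤ)
          = (lstar C : ℤ) * ((lstar C : ℤ) - 1) + 1 := by
        push_cast [Nat.cast_sub (by omega : 1 ≤ lstar C)]
        ring
      calc (lstar C : ℤ) * ((lstar C : ℤ) - 1) + 1
          = ((lstar C * (lstar C - 1) + 1 : ℕ) : ℤ) := hcast.symm
        _ ≤ (c : ℤ) * r := by exact_mod_cast this
    have hconZ0 : (c : ℤ) + r < 2 * (lstar C : ℤ) := by exact_mod_cast hcon
    have hconZ : (c : ℤ) + r ≤ 2 * (lstar C : ℤ) - 1 := by omega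
    have hl2Z : (2 : ℤ) ≤ (lstar C : ℤ) := by exact_mod_cast hl2
    nlinarith [sq_nonneg ((c : ℤ) - r), sq_nonneg ((c : ℤ) + r), hcrZ, hconZ,
      mul_self_nonneg ((c : ℤ) + r - (2 * (lstar C : ℤ) - 1))]
  have hP4 : 4 * lstar C ≤ nEdge K L σ 0 1 + nEdge K L σ 0 2 := le_trans (by omega) hP
  -- real arithmetic
  have hdeg := degree_count K L σ
  rw [hV] at hdeg
  have hvcR : ((lstar C * (lstar C - 1) + 1 : ℕ) : ℝ)
      = (lstar C : ℝ) ^ 2 - (lstar C : ℝ) + 1 := by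
    push_cast [Nat.cast_sub (by omega : 1 ≤ lstar C)]
    ring
  have hdegR : 4 * ((lstar C : ℝ) ^ 2 - (lstar C : ℝ) + 1)
      = 2 * (nEdge K L σ 0 0 : ℝ) + (nEdge K L σ 0 1 : ℝ) + (nEdge K L σ 0 2 : ℝ) := by
    rw [← hvcR]
    exact_mod_cast hdeg
  have hpartR : (nEdge K L σ 0 0 : ℝ) + (nEdge K L σ 1 1 : ℝ) + (nEdge K L σ 2 2 : ℝ)
      + ((nEdge K L σ 0 1 : ℝ) + (nEdge K L σ 0 2 : ℝ) + (nEdge K L σ 1 2 : ℝ))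
      = 2 * ((K : ℝ) * L) := by exact_mod_cast nEdge_partition K L σ
  have hP4R : 4 * (lstar C : ℝ) ≤ (nEdge K L σ 0 1 : ℝ) + (nEdge K L σ 0 2 : ℝ) := by
    exact_mod_cast hP4
  have hmul : (C.γ1 / 2 + C.γ12) * (4 * (lstar C : ℝ))
      ≤ (C.γ1 / 2 + C.γ12) * ((nEdge K L σ 0 1 : ℝ) + (nEdge K L σ 0 2 : ℝ)) :=
    mul_le_mul_of_nonneg_left hP4R (by linarith)
  have hγ23x : 0 ≤ (C.J23 + C.J22) * (nEdge K L σ 1 2 : ℝ) := by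
    apply mul_nonneg
    · unfold Couplings.γ23 at hγ23; linarith
    · exact Nat.cast_nonneg _
  have hmulJ : C.J22 * ((nEdge K L σ 0 0 : ℝ) + (nEdge K L σ 1 1 : ℝ) + (nEdge K L σ 2 2 : ℝ)
      + ((nEdge K L σ 0 1 : ℝ) + (nEdge K L σ 0 2 : ℝ) + (nEdge K L σ 1 2 : ℝ)))
      = C.J22 * (2 * ((K : ℝ) * L)) := by rw [hpartR]
  have hdegm : (C.J11 - C.J22) * (4 * ((lstar C : ℝ) ^ 2 - (lstar C : ℝ) + 1))
      = (C.J11 - C.J22) * (2 * (nEdge K L σ 0 0 : ℝ) + (nEdge K L σ 0 1 : ℝ)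
        + (nEdge K L σ 0 2 : ℝ)) := by rw [hdegR]
  rw [H_const1, Gammastar_eq K L hadm]
  simp only [H]
  rw [← hadm.h2233, ← hadm.h1213]
  unfold Couplings.γ1 Couplings.γ12 at hmul ⊢
  linarith [hmul, hγ23x, hmulJ, hdegm]

set_option maxHeartbeats 1000000 in
lemma safe_le (hadm : Admissible K L C) (σ : Config K L)
    (hVle : nVtx K L σ 0 ≤ lstar C * (lstar C - 1)) :
    H K L C (proj K L 0 1 σ) ≤ H K L C σ := by
  have hγ1 : 0 < C.γ1 := gamma1_pos hadm.h1122
  have hγ12 : 0 < C.γ12 := by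
    have h1 := hadm.pos12; have h2 := hadm.pos22
    unfold Couplings.γ12; linarith
  have hγ23 : 0 < C.γ23 := by
    have h1 := hadm.pos23; have h2 := hadm.pos22
    unfold Couplings.γ23; linarith
  have hl2 : 2 ≤ lstar C := lstar_ge_two K L hadm
  have hpartR : (nEdge K L σ 0 0 : ℝ) + (nEdge K L σ 1 1 : ℝ) + (nEdge K L σ 2 2 : ℝ)
      + ((nEdge K L σ 0 1 : ℝ) + (nEdge K L σ 0 2 : ℝ) + (nEdge K L σ 1 2 : ℝ))
      = 2 * ((K : ℝ) * L) := by exact_mod_cast nEdge_partition K L σ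
  have hmulJ : C.J22 * ((nEdge K L σ 0 0 : ℝ) + (nEdge K L σ 1 1 : ℝ) + (nEdge K L σ 2 2 : ℝ)
      + ((nEdge K L σ 0 1 : ℝ) + (nEdge K L σ 0 2 : ℝ) + (nEdge K L σ 1 2 : ℝ)))
      = C.J22 * (2 * ((K : ℝ) * L)) := by rw [hpartR]
  have hdeg := degree_count K L σ
  have hdegR : 4 * ((nVtx K L σ 0 : ℕ) : ℝ)
      = 2 * (nEdge K L σ 0 0 : ℝ) + (nEdge K L σ 0 1 : ℝ) + (nEdge K L σ 0 2 : ℝ) := by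
    exact_mod_cast hdeg
  have hdegm : (C.J11 - C.J22) * (4 * ((nVtx K L σ 0 : ℕ) : ℝ))
      = (C.J11 - C.J22) * (2 * (nEdge K L σ 0 0 : ℝ) + (nEdge K L σ 0 1 : ℝ)
        + (nEdge K L σ 0 2 : ℝ)) := by rw [hdegR]
  rcases Nat.eq_zero_or_pos (nVtx K L σ 0) with hV0 | hVpos
  · -- no zero spins at all
    rw [hV0] at hdeg
    have h00 : nEdge K L σ 0 0 = 0 := by omega
    have h01 : nEdge K L σ 0 1 = 0 := by omega
    have h02 : nEdge K L σ 0 2 = 0 := by omega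
    rw [H_proj12_eq K L C hadm.h2233 σ]
    simp only [H]
    rw [h00, h01, h02, ← hadm.h2233]
    rw [h00, h01, h02] at hmulJ
    push_cast at hmulJ ⊢
    linarith [hmulJ]
  · have hvK : lstar C * (lstar C - 1) + 1 < K := vc_lt_K K L C hadm
    have hvL : lstar C * (lstar C - 1) + 1 < L := lt_of_lt_of_le hvK hadm.hKL
    obtain ⟨c, r, hcr, hc0, hr0, hP⟩ := isoperimetric K L σ hVpos (by omega) (by omega)
    -- 2 V ≤ ℓ* (c + r)
    have h4V : 4 * nVtx K L σ 0 ≤ (c + r) * (c + r) := by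
      have hZ : 4 * ((c : ℤ) * r) ≤ ((c : ℤ) + r) * ((c : ℤ) + r) := by
        nlinarith [sq_nonneg ((c : ℤ) - r)]
      have h1 : 4 * (c * r) ≤ (c + r) * (c + r) := by exact_mod_cast hZ
      have h2 : 4 * nVtx K L σ 0 ≤ 4 * (c * r) := by omega
      omega
    have hVsq : nVtx K L σ 0 ≤ lstar C * lstar C := by
      have : lstar C * (lstar C - 1) ≤ lstar C * lstar C :=
        Nat.mul_le_mul_left _ (Nat.sub_le _ _)
      omega
    have h2V : 2 * nVtx K L σ 0 ≤ lstar C * (c + r) := by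
      have hsq : (2 * nVtx K L σ 0) ^ 2 ≤ (lstar C * (c + r)) ^ 2 := by
        have e1 : (2 * nVtx K L σ 0) ^ 2 = (4 * nVtx K L σ 0) * nVtx K L σ 0 := by ring
        have e2 : (lstar C * (c + r)) ^ 2 = ((c + r) * (c + r)) * (lstar C * lstar C) := by
          ring
        rw [e1, e2]
        exact Nat.mul_le_mul h4V hVsq
      exact (Nat.pow_le_pow_iff_left (by norm_num : (2 : ℕ) ≠ 0)).mp hsq
    -- real chain
    have h2VR : 2 * ((nVtx K L σ 0 : ℕ) : ℝ) ≤ (lstar C : ℝ) * ((c : ℝ) + r) := by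
      exact_mod_cast h2V
    have hPR : 2 * ((c : ℝ) + r) ≤ (nEdge K L σ 0 1 : ℝ) + (nEdge K L σ 0 2 : ℝ) := by
      exact_mod_cast hP
    have hcr0 : (0 : ℝ) ≤ (c : ℝ) + r := by positivity
    have f2 : C.γ1 * (2 * ((nVtx K L σ 0 : ℕ) : ℝ)) ≤ C.γ1 * ((lstar C : ℝ) * ((c : ℝ) + r)) :=
      mul_le_mul_of_nonneg_left h2VR hγ1.le
    have f3 : C.γ1 * (lstar C : ℝ) < C.γ12 + 3 / 2 * C.γ1 := lstar_mul_lt K L hadm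
    have f4 : (C.γ1 * (lstar C : ℝ)) * ((c : ℝ) + r)
        ≤ (C.γ12 + 3 / 2 * C.γ1) * ((c : ℝ) + r) :=
      mul_le_mul_of_nonneg_right f3.le hcr0
    have f5 : C.γ12 + 3 / 2 * C.γ1 ≤ C.γ1 + 2 * C.γ12 - 2 * C.γ23 := by
      have := hadm.hC
      linarith
    have f5' : (C.γ12 + 3 / 2 * C.γ1) * ((c : ℝ) + r)
        ≤ (C.γ1 + 2 * C.γ12 - 2 * C.γ23) * ((c : ℝ) + r) :=
      mul_le_mul_of_nonneg_right f5 hcr0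
    have f6 : (C.γ1 + 2 * C.γ12 - 2 * C.γ23) * (2 * ((c : ℝ) + r))
        ≤ (C.γ1 + 2 * C.γ12 - 2 * C.γ23) * ((nEdge K L σ 0 1 : ℝ) + (nEdge K L σ 0 2 : ℝ)) :=
      mul_le_mul_of_nonneg_left hPR (by linarith)
    have hkey : 4 * C.γ1 * ((nVtx K L σ 0 : ℕ) : ℝ)
        ≤ (C.γ1 + 2 * C.γ12 - 2 * C.γ23)
          * ((nEdge K L σ 0 1 : ℝ) + (nEdge K L σ 0 2 : ℝ)) := by
      linarith [f2, f4, f5', f6]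
    have hγ23m : C.γ23 * (nEdge K L σ 0 2 : ℝ)
        ≤ C.γ23 * ((nEdge K L σ 0 1 : ℝ) + (nEdge K L σ 0 2 : ℝ)) := by
      apply mul_le_mul_of_nonneg_left _ hγ23.le
      have : (0 : ℝ) ≤ (nEdge K L σ 0 1 : ℝ) := Nat.cast_nonneg _
      linarith
    rw [H_proj12_eq K L C hadm.h2233 σ]
    simp only [H]
    rw [← hadm.h2233, ← hadm.h1213]
    unfold Couplings.γ1 Couplings.γ12 Couplings.γ23 at hkey
    unfold Couplings.γ23 at hγ23m
    linarith [hkey, hγ23m, hmulJ, hdegm]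

end MainEstimates
section Assembly

variable (K L : ℕ) [NeZero K] [NeZero L]

lemma Path.le_height (C : Couplings) (ω : Path K L) (n : ℕ) (hn : n ≤ ω.len) :
    H K L C (ω.toFun n) ≤ ω.height C := by
  unfold Path.height
  exact Finset.le_sup' (fun m => H K L C (ω.toFun m))
    (Finset.mem_range.mpr (by omega : n < ω.len + 1))

lemma Path.height_lt (C : Couplings) (ω : Path K L) (b : ℝ)
    (h : ∀ n ≤ ω.len, H K L C (ω.toFun n) < b) : ω.height C < b := by
  unfold Path.height
  rw [Finset.sup'_lt_iff]
  intro i hi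
  exact h i (by have := Finset.mem_range.mp hi; omega)

lemma Phi_bddBelow (C : Couplings) (σ σ' : Config K L) :
    BddBelow {x | ∃ ω : Path K L, ω.FromTo σ σ' ∧ ω.height C = x} := by
  refine ⟨H K L C σ, ?_⟩
  rintro x ⟨ω, ⟨h0, h1⟩, rfl⟩
  have h := Path.le_height K L C ω 0 (Nat.zero_le _)
  rwa [h0] at h

lemma Phi_le (C : Couplings) (σ σ' : Config K L) (ω : Path K L) (h : ω.FromTo σ σ') :
    Phi K L C σ σ' ≤ ω.height C :=
  csInf_le (Phi_bddBelow K L C σ σ') ⟨ω, h, rfl⟩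

lemma Phi_nonempty (C : Couplings) (σ σ' : Config K L) :
    {x | ∃ ω : Path K L, ω.FromTo σ σ' ∧ ω.height C = x}.Nonempty := by
  obtain ⟨ω, h⟩ := exists_fromTo σ σ'
  exact ⟨_, ω, h, rfl⟩

lemma proj_flip (a b : Spin) {σ σ' : Config K L} (h : SingleFlip K L σ σ') :
    proj K L a b σ = proj K L a b σ' ∨ SingleFlip K L (proj K L a b σ) (proj K L a b σ') := by
  obtain ⟨v, hv, hoff⟩ := h
  have hoff' : ∀ w, w ≠ v → proj K L a b σ w = proj K L a b σ' w := by
    intro w hw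
    show (if σ w = a then b else σ w) = (if σ' w = a then b else σ' w)
    rw [hoff w hw]
  by_cases hvv : proj K L a b σ v = proj K L a b σ' v
  · left
    funext w
    by_cases hw : w = v
    · rw [hw]; exact hvv
    · exact hoff' w hw
  · right
    exact ⟨v, hvv, hoff'⟩

lemma proj_const (a b t : Spin) (h : t ≠ a) :
    proj K L a b (const K L t) = const K L t :=
  funext fun _ => if_neg h

lemma proj_initCycle (C : Couplings) (r a b : Spin)
    (hconst : proj K L a b (const K L r) = const K L r)
    (hsafe : ∀ ω : Path K L, ω.toFun 0 = const K L r →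
      (∀ n ≤ ω.len, H K L C (ω.toFun n) < H K L C (const K L 1) + Γstar C) →
      ∀ n ≤ ω.len, H K L C (proj K L a b (ω.toFun n)) < H K L C (const K L 1) + Γstar C) :
    proj K L a b '' initCycle K L C r ⊆ initCycle K L C r := by
  rintro x ⟨σ, hσ, rfl⟩
  have hσ' : Phi K L C (const K L r) σ < H K L C (const K L 1) + Γstar C := hσ
  obtain ⟨y, ⟨ω, hft, hy⟩, hylt⟩ :=
    exists_lt_of_csInf_lt (Phi_nonempty K L C (const K L r) σ) hσ'
  have hh : ω.height C < H K L C (const K L 1) + Γstar C := hy ▸ hylt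
  have hall : ∀ n ≤ ω.len, H K L C (ω.toFun n) < H K L C (const K L 1) + Γstar C :=
    fun n hn => lt_of_le_of_lt (Path.le_height K L C ω n hn) hh
  have hdich : ∀ n, n < ω.len → (proj K L a b (ω.toFun n) = proj K L a b (ω.toFun (n + 1)))
      ∨ SingleFlip K L (proj K L a b (ω.toFun n)) (proj K L a b (ω.toFun (n + 1))) :=
    fun n hn => proj_flip K L a b (ω.step n hn)
  obtain ⟨ω', h0, h1, hmem⟩ :=
    exists_path_of_chain (fun n => proj K L a b (ω.toFun n)) ω.len hdich
  have hft' : ω'.FromTo (const K L r) (proj K L a b σ) := by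
    constructor
    · rw [h0, hft.1, hconst]
    · rw [h1, hft.2]
  have hP := hsafe ω hft.1 hall
  have hlt : ω'.height C < H K L C (const K L 1) + Γstar C := by
    apply Path.height_lt
    intro n hn
    obtain ⟨m, hm, hEq⟩ := hmem n
    rw [hEq]
    exact hP m hm
  show Phi K L C (const K L r) (proj K L a b σ) < H K L C (const K L 1) + Γstar C
  exact lt_of_le_of_lt (Phi_le K L C _ _ ω' hft') hlt

lemma hsafe32 (C : Couplings) (hadm : Admissible K L C) :
    ∀ ω : Path K L, ∀ n ≤ ω.len,
      H K L C (ω.toFun n) < H K L C (const K L 1) + Γstar C →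
      H K L C (proj K L 2 1 (ω.toFun n)) < H K L C (const K L 1) + Γstar C := by
  intro ω n _ h
  refine lt_of_le_of_lt (H_proj32_le K L C hadm.h2233 hadm.h1213 ?_ _) h
  have h1 := hadm.pos23; have h2 := hadm.pos22
  linarith

lemma hsafe12 (C : Couplings) (hadm : Admissible K L C) (r : Spin) (hr : r ≠ 0) :
    ∀ ω : Path K L, ω.toFun 0 = const K L r →
      (∀ n ≤ ω.len, H K L C (ω.toFun n) < H K L C (const K L 1) + Γstar C) →
      ∀ n ≤ ω.len, H K L C (proj K L 0 1 (ω.toFun n))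
        < H K L C (const K L 1) + Γstar C := by
  intro ω h0 hall
  have hVle : ∀ n, n ≤ ω.len → nVtx K L (ω.toFun n) 0 ≤ lstar C * (lstar C - 1) := by
    intro n
    induction n with
    | zero =>
        intro _
        rw [h0, nVtx_const_eq_zero K L r hr]
        exact Nat.zero_le _
    | succ k ih =>
        intro hk1
        have hk : k ≤ ω.len := by omega
        have hstep := ω.step k (by omega)
        have hle := nVtx_flip_le K L hstep
        have hk' := ih hk
        rcases Nat.lt_or_ge (nVtx K L (ω.toFun (k + 1)) 0) (lstar C * (lstar C - 1) + 1)
          with h | h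
        · omega
        · exfalso
          have hEq : nVtx K L (ω.toFun (k + 1)) 0 = lstar C * (lstar C - 1) + 1 := by omega
          have hcrit := crit_lower K L C hadm _ hEq
          exact absurd (hall (k + 1) hk1) (not_lt.mpr hcrit)
  intro n hn
  exact lt_of_le_of_lt (safe_le K L C hadm _ (hVle n hn)) (hall n hn)

end Assembly

theorem initial_cycles_stable_under_projection (K L : ℕ) [NeZero K] [NeZero L] (C : Couplings)
    (hadm : Admissible K L C) :
    proj K L 2 1 '' initCycle K L C 0 ⊆ initCycle K L C 0 ∧
    proj K L 2 1 '' initCycle K L C 1 ⊆ initCycle K L C 1 ∧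
    proj K L 0 1 '' initCycle K L C 1 ⊆ initCycle K L C 1 ∧
    proj K L 0 1 '' initCycle K L C 2 ⊆ initCycle K L C 2 := by
  refine ⟨?_, ?_, ?_, ?_⟩
  · exact proj_initCycle K L C 0 2 1 (proj_const K L 2 1 0 (by decide))
      (fun ω _ hall n hn => hsafe32 K L C hadm ω n hn (hall n hn))
  · exact proj_initCycle K L C 1 2 1 (proj_const K L 2 1 1 (by decide))
      (fun ω _ hall n hn => hsafe32 K L C hadm ω n hn (hall n hn))
  · exact proj_initCycle K L C 1 0 1 (proj_const K L 0 1 1 (by decide))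
      (hsafe12 K L C hadm 1 (by decide))
  · exact proj_initCycle K L C 2 0 1 (proj_const K L 0 1 2 (by decide))
      (hsafe12 K L C hadm 2 (by decide))

end GenPotts
end

section
/- Fix h > 0 and let f_h(x) = 4(x+h/2)⌈(x+h/2)/h⌉ − 2h(⌈(x+h/2)/h⌉² − ⌈(x+h/2)/h⌉ + 1) for x > 0. Then: (a) for every integer m ≥ 0 and every x ∈ ((m−1/2)h, (m+1/2)h] one has f_h(x) = 4(m+1)x − 2hm², and f_h is continuous and strictly increasing on (0,∞); (b) f_h(h/2) = 2h and f_h(x) → ∞ as x → ∞; (c) for every x > 0, 0 ≤ f_h(x) − (2x²/h + 4x − h/2) ≤ h/2, where the left equality holds if and only if (x + h/2)/h is an integer and the right equality holds if and only if x/h is an integer. -/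
namespace GenPotts

section AuxProofs

private lemma fh_eq_aux (h : ℝ) (hh : 0 < h) (x : ℝ) :
    fh h x = 2 * x ^ 2 / h + 4 * x - h / 2
      + 2 * h * (Int.fract (-((x + h / 2) / h)) * (1 - Int.fract (-((x + h / 2) / h)))) := by
  have hne : h ≠ 0 := ne_of_gt hh
  unfold fh
  rw [Int.fract, Int.floor_neg]
  push_cast
  field_simp
  ring

private lemma fh_strict_aux (h : ℝ) (hh : 0 < h) {x x' : ℝ} (hx : 0 < x) (hx' : 0 < x')
    (hlt : x < x') : fh h x < fh h x' := by
  have hne : h ≠ 0 := ne_of_gt hh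
  set t := (x + h / 2) / h with ht
  set t' := (x' + h / 2) / h with ht'
  have htpos : 0 < t := by positivity
  have hc1 : (1 : ℤ) ≤ ⌈t⌉ := Int.ceil_pos.2 htpos
  have hcc : ⌈t⌉ ≤ ⌈t'⌉ := Int.ceil_le_ceil (by rw [ht, ht']; gcongr <;> linarith)
  have hle : t ≤ (⌈t⌉ : ℝ) := Int.le_ceil t
  have hle' : t' ≤ (⌈t'⌉ : ℝ) := Int.le_ceil t'
  have hgt : (⌈t⌉ : ℝ) < t + 1 := Int.ceil_lt_add_one t
  have hgt' : (⌈t'⌉ : ℝ) < t' + 1 := Int.ceil_lt_add_one t'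
  have hty : t * h = x + h / 2 := by rw [ht]; field_simp
  have hty' : t' * h = x' + h / 2 := by rw [ht']; field_simp
  have hc1R : (1 : ℝ) ≤ (⌈t⌉ : ℝ) := by exact_mod_cast hc1
  rcases eq_or_lt_of_le hcc with heq | hlt2
  · unfold fh
    rw [← ht, ← ht', ← heq]
    have : x + h/2 < x' + h/2 := by linarith
    nlinarith [hc1R]
  · have h2 : ((⌈t⌉ : ℝ) + 1) ≤ (⌈t'⌉ : ℝ) := by exact_mod_cast hlt2
    unfold fh
    rw [← ht, ← ht']
    have hxle : x + h / 2 ≤ h * (⌈t⌉ : ℝ) := by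
      rw [← hty]; nlinarith
    have hxgt : h * ((⌈t'⌉ : ℝ) - 1) < x' + h / 2 := by
      rw [← hty']; nlinarith
    nlinarith [mul_pos hh (by linarith : (0:ℝ) < (⌈t'⌉:ℝ) - (⌈t⌉:ℝ)), hc1R,
      mul_nonneg hh.le (sq_nonneg ((⌈t'⌉:ℝ) - (⌈t⌉:ℝ)))]

private lemma fh_cont_aux (h : ℝ) (hh : 0 < h) : Continuous (fh h) := by
  have hne : h ≠ 0 := ne_of_gt hh
  have hg : Continuous ((fun u : ℝ => u * (1 - u)) ∘ Int.fract) :=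
    ContinuousOn.comp_fract'' (by fun_prop) (by norm_num)
  have hcont : Continuous fun x : ℝ => 2 * x ^ 2 / h + 4 * x - h / 2
      + 2 * h * (Int.fract (-((x + h / 2) / h)) * (1 - Int.fract (-((x + h / 2) / h)))) := by
    apply Continuous.add
    · fun_prop
    · exact continuous_const.mul
        (hg.comp (by fun_prop : Continuous fun x : ℝ => -((x + h / 2) / h)))
  exact hcont.congr fun x => (fh_eq_aux h hh x).symm

end AuxProofs

theorem auxiliary_function_properties (h : ℝ) (hh : 0 < h) :
    (∀ (m : ℕ) (x : ℝ), ((m : ℝ) - 1 / 2) * h < x → x ≤ ((m : ℝ) + 1 / 2) * h →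
      fh h x = 4 * ((m : ℝ) + 1) * x - 2 * h * (m : ℝ) ^ 2) ∧
    ContinuousOn (fh h) (Set.Ioi 0) ∧
    StrictMonoOn (fh h) (Set.Ioi 0) ∧
    fh h (h / 2) = 2 * h ∧
    Filter.Tendsto (fh h) Filter.atTop Filter.atTop ∧
    (∀ x : ℝ, 0 < x →
      0 ≤ fh h x - (2 * x ^ 2 / h + 4 * x - h / 2) ∧
      fh h x - (2 * x ^ 2 / h + 4 * x - h / 2) ≤ h / 2 ∧
      (fh h x - (2 * x ^ 2 / h + 4 * x - h / 2) = 0 ↔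
        ∃ n : ℤ, (x + h / 2) / h = (n : ℝ)) ∧
      (fh h x - (2 * x ^ 2 / h + 4 * x - h / 2) = h / 2 ↔
        ∃ n : ℤ, x / h = (n : ℝ))) := by
  constructor
  · -- part (a) formula
    intro m x h1 h2
    have hne : h ≠ 0 := ne_of_gt hh
    have hceil : ⌈(x + h / 2) / h⌉ = (m : ℤ) + 1 := by
      rw [Int.ceil_eq_iff]
      constructor
      · push_cast
        rw [lt_div_iff₀ hh]
        linarith
      · push_cast
        rw [div_le_iff₀ hh]
        linarith
    unfold fh
    rw [hceil]
    push_cast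
    ring
  refine ⟨(fh_cont_aux h hh).continuousOn, fun x hx x' hx' hlt => fh_strict_aux h hh hx hx' hlt,
    ?_, ?_, ?_⟩
  · -- value at h/2
    have hne : h ≠ 0 := ne_of_gt hh
    have hc : ⌈(h / 2 + h / 2) / h⌉ = 1 := by
      rw [show (h / 2 + h / 2) / h = 1 by field_simp; norm_num]
      exact Int.ceil_one
    unfold fh
    rw [hc]
    push_cast
    ring
  · -- tendsto atTop
    apply Filter.tendsto_atTop_mono (f := fun x : ℝ => 4 * x - h / 2)
    · intro x
      rw [fh_eq_aux h hh x]
      have h0 := Int.fract_nonneg (-((x + h / 2) / h))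
      have h1 := Int.fract_lt_one (-((x + h / 2) / h))
      have hq : 0 ≤ 2 * x ^ 2 / h := by positivity
      have hnn : 0 ≤ 2 * h *
          (Int.fract (-((x + h / 2) / h)) * (1 - Int.fract (-((x + h / 2) / h)))) :=
        mul_nonneg (by linarith) (mul_nonneg h0 (by linarith))
      linarith
    · apply Filter.tendsto_atTop_add_const_right
      exact Filter.Tendsto.const_mul_atTop (by norm_num) Filter.tendsto_id
  · -- part (c)
    intro x hx
    have hne : h ≠ 0 := ne_of_gt hh
    have hd : fh h x - (2 * x ^ 2 / h + 4 * x - h / 2)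
        = 2 * h * (Int.fract (-((x + h / 2) / h)) * (1 - Int.fract (-((x + h / 2) / h)))) := by
      rw [fh_eq_aux h hh x]; ring
    set u := Int.fract (-((x + h / 2) / h)) with hu
    have h0 : 0 ≤ u := Int.fract_nonneg _
    have h1 : u < 1 := Int.fract_lt_one _
    refine ⟨by rw [hd]; exact mul_nonneg (by linarith) (mul_nonneg h0 (by linarith)),
      by rw [hd]; nlinarith [mul_nonneg hh.le (sq_nonneg (2 * u - 1))], ?_, ?_⟩
    · rw [hd]
      constructor
      · intro he
        rcases mul_eq_zero.1 he with h2 | h2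
        · exact absurd h2 (by positivity)
        rcases mul_eq_zero.1 h2 with h3 | h3
        · have hflz : -((x + h / 2) / h) = (⌊-((x + h / 2) / h)⌋ : ℝ) := by
            have h4 : u = -((x + h / 2) / h) - (⌊-((x + h / 2) / h)⌋ : ℝ) := hu
            rw [h3] at h4
            linarith
          exact ⟨-⌊-((x + h / 2) / h)⌋, by push_cast; linarith⟩
        · linarith
      · rintro ⟨n, hn⟩
        have hz : u = 0 := by rw [hu, hn, ← Int.cast_neg, Int.fract_intCast]
        rw [hz]; ring
    · rw [hd]
      have hxh : (x + h / 2) / h = x / h + 1 / 2 := by rw [div_eq_iff hne]; field_simp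
      constructor
      · intro he
        have hq : u * (1 - u) = 1 / 4 :=
          mul_left_cancel₀ (show (2 * h) ≠ 0 by positivity) (by linarith)
        have hsq : (u - 1 / 2) ^ 2 = 0 := by nlinarith
        have hu2 : u = 1 / 2 := by have h5 := sq_eq_zero_iff.1 hsq; linarith
        have hfl : -((x + h / 2) / h) - (⌊-((x + h / 2) / h)⌋ : ℝ) = 1 / 2 := by
          rw [hu, ← Int.self_sub_floor] at hu2; exact hu2
        rw [hxh] at hfl
        refine ⟨-⌊-(x / h + 1 / 2)⌋ - 1, ?_⟩
        push_cast
        linarith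
      · rintro ⟨n, hn⟩
        have h12 : u = 1 / 2 := by
          rw [hu, hxh, hn,
            show -((n : ℝ) + 1 / 2) = ((-n - 1 : ℤ) : ℝ) + 1 / 2 by push_cast; ring,
            Int.fract_intCast_add]
          exact Int.fract_eq_self.2 ⟨by norm_num, by norm_num⟩
        rw [h12]; ring

end GenPotts
end
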